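/- arXiv:1303.0761 — 6 statements merged into one kernel-verified Lean document; each statement's English description precedes it below -/
import Mathlib

section
/- Finite-volume Wells inequality. Let V be a nonempty finite set, let J : V × V → ℝ be symmetric with J(y,z) ≥ 0 and J(y,y) = 0 for all y,z ∈ V, and let K : V → ℝ satisfy K(y) ≥ 0 for all y ∈ V. Let χ be a nonzero finite symmetric Borel measure on ℝ such that ∫ exp(ϑ t²) χ(dt) < ∞ for every ϑ > 0, and let a > 0 satisfy the Wells condition χ([a√2, ∞)) ≥ χ([0, a]). Define H(σ) = (1/2) Σ_{y,z ∈ V} J(y,z) σ_y σ_z + Σ_{y ∈ V} K(y) σ_y for σ ∈ ℝ^V, and H_a(τ) = (a²/2) Σ_{y,z ∈ V} J(y,z) τ_y τ_z + a Σ_{y ∈ V} K(y) τ_y. Then for every x ∈ V, (∫_{ℝ^V} σ_x exp(H(σ)) χ^{⊗V}(dσ)) / (∫_{ℝ^V} exp(H(σ)) χ^{⊗V}(dσ)) ≥ a · (∫_{ℝ^V} τ_x exp(H_a(τ)) μ_I^{⊗V}(dτ)) / (∫_{ℝ^V} exp(H_a(τ)) μ_I^{⊗V}(dτ)). -/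
set_option maxHeartbeats 1000000

open MeasureTheory
open scoped ENNReal

namespace WellsAux
open Real Finset


lemma pow_le_fact_exp (x : ℝ) (hx : 0 ≤ x) (k : ℕ) : x ^ k ≤ k.factorial * Real.exp x := by
  have h1 : x ^ k / k.factorial ≤ ∑ i ∈ Finset.range (k + 1), x ^ i / i.factorial := by
    refine Finset.single_le_sum (f := fun i => x ^ i / i.factorial) ?_ ?_
    · intro i _; positivity
    · simp
  have h2 := Real.sum_le_exp_of_nonneg hx (k + 1)
  have hk : (0:ℝ) < k.factorial := by exact_mod_cast k.factorial_pos
  calc x ^ k = (x ^ k / k.factorial) * k.factorial := by field_simp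
    _ ≤ Real.exp x * k.factorial := by
        apply mul_le_mul_of_nonneg_right (h1.trans h2) hk.le
    _ = k.factorial * Real.exp x := mul_comm _ _

lemma abs_le_one_add_sq (x : ℝ) : |x| ≤ 1 + x ^ 2 := by
  rcases le_or_gt (|x|) 1 with h | h
  · nlinarith [sq_nonneg x]
  · nlinarith [sq_abs x, abs_nonneg x]

lemma integral_pi_prod {V : Type*} [Fintype V] (μ : Measure ℝ) [SigmaFinite μ]
    (f : V → ℝ → ℝ) :
    ∫ x : V → ℝ, ∏ i, f i (x i) ∂(Measure.pi fun _ => μ) = ∏ i, ∫ x, f i x ∂μ := by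
  letI : MeasureSpace ℝ := { volume := μ }
  exact MeasureTheory.integral_fintype_prod_eq_prod (μ := fun _ => μ) f

lemma integrable_pi_prod {V : Type*} [Fintype V] (μ : Measure ℝ) [SigmaFinite μ]
    (f : V → ℝ → ℝ) (hf : ∀ i, Integrable (f i) μ) :
    Integrable (fun x : V → ℝ => ∏ i, f i (x i)) (Measure.pi fun _ => μ) := by
  letI : MeasureSpace ℝ := { volume := μ }
  exact MeasureTheory.Integrable.fintype_prod hf



-- g x = (x+a)^d + (x-a)^d, d even: monotone in |x|
lemma g_expand (a x : ℝ) (d : ℕ) :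
    (x + a) ^ d + (x - a) ^ d
      = ∑ k ∈ Finset.range (d + 1), x ^ k * ((a ^ (d - k) + (-a) ^ (d - k)) * (d.choose k)) := by
  rw [add_pow, sub_eq_add_neg, add_pow, ← Finset.sum_add_distrib]
  exact Finset.sum_congr rfl fun k _ => by ring

lemma g_mono {a : ℝ} (ha : 0 ≤ a) {d : ℕ} (hd : Even d) {s t : ℝ} (h : |s| ≤ |t|) :
    (s + a) ^ d + (s - a) ^ d ≤ (t + a) ^ d + (t - a) ^ d := by
  rw [g_expand, g_expand]
  apply Finset.sum_le_sum
  intro k hk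
  rcases Nat.even_or_odd (d - k) with he | ho
  · have hcoef : (0:ℝ) ≤ (a ^ (d - k) + (-a) ^ (d - k)) * (d.choose k) := by
      rw [he.neg_pow]; positivity
    have hkeven : Even k := by
      have hkd : k ≤ d := Nat.lt_succ_iff.mp (Finset.mem_range.mp hk)
      have := (Nat.even_sub hkd).mp he
      exact this.mp hd
    have hst : s ^ k ≤ t ^ k := by
      rw [← hkeven.pow_abs s, ← hkeven.pow_abs t]
      exact pow_le_pow_left₀ (abs_nonneg s) h k
    exact mul_le_mul_of_nonneg_right hst hcoef
  · rw [ho.neg_pow]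
    simp

lemma g_nonneg {a : ℝ} (ha : 0 ≤ a) {d : ℕ} (hd : Even d) (s : ℝ) :
    0 ≤ (s + a) ^ d + (s - a) ^ d := by
  have h0 : (0 + a) ^ d + (0 - a) ^ d ≤ (s + a) ^ d + (s - a) ^ d :=
    g_mono ha hd (by simp [abs_nonneg])
  have : (0 + a) ^ d + (0 - a) ^ d = 2 * a ^ d := by
    rw [zero_add, zero_sub, hd.neg_pow]; ring
  nlinarith [pow_nonneg ha d]

lemma phi_eq {m n : ℕ} (hmn : m ≤ n) (a s : ℝ) :
    (s - a) ^ m * (s + a) ^ n + (s + a) ^ m * (s - a) ^ n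
      = (s ^ 2 - a ^ 2) ^ m * ((s + a) ^ (n - m) + (s - a) ^ (n - m)) := by
  obtain ⟨d, rfl⟩ : ∃ d, n = m + d := ⟨n - m, (Nat.add_sub_cancel' hmn).symm⟩
  rw [Nat.add_sub_cancel_left, show s ^ 2 - a ^ 2 = (s - a) * (s + a) by ring, mul_pow]
  ring

lemma phi_abs_bound (a s : ℝ) (ha : 0 ≤ a) (m n : ℕ) :
    |(s - a) ^ m * (s + a) ^ n + (s + a) ^ m * (s - a) ^ n|
      ≤ 2 * ((m + n).factorial * Real.exp a * Real.exp 1) * Real.exp (1 * s ^ 2) := by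
  have hb : ∀ k : ℕ, |s - a| ^ k ≤ (|s| + a) ^ k ∧ |s + a| ^ k ≤ (|s| + a) ^ k := by
    intro k
    constructor <;> apply pow_le_pow_left₀ (abs_nonneg _)
    · calc |s - a| ≤ |s| + |a| := abs_sub _ _
        _ = |s| + a := by rw [abs_of_nonneg ha]
    · calc |s + a| ≤ |s| + |a| := abs_add_le _ _
        _ = |s| + a := by rw [abs_of_nonneg ha]
  have key : (|s| + a) ^ (m + n) ≤ (m + n).factorial * Real.exp a * Real.exp 1 * Real.exp (1 * s ^ 2) := by
    calc (|s| + a) ^ (m + n) ≤ (m + n).factorial * Real.exp (|s| + a) :=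
          pow_le_fact_exp _ (by positivity) _
      _ = (m + n).factorial * Real.exp a * Real.exp |s| := by
          rw [Real.exp_add]; ring
      _ ≤ (m + n).factorial * Real.exp a * Real.exp (1 * s ^ 2 + 1) := by
          have h1 : |s| ≤ 1 * s ^ 2 + 1 := by have := abs_le_one_add_sq s; nlinarith
          have := Real.exp_le_exp.mpr h1
          have hf : (0:ℝ) ≤ (m + n).factorial * Real.exp a := by positivity
          nlinarith
      _ = (m + n).factorial * Real.exp a * Real.exp 1 * Real.exp (1 * s ^ 2) := by
          rw [Real.exp_add]; ring
  have h1 : |(s - a) ^ m * (s + a) ^ n| ≤ (|s| + a) ^ (m + n) := by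
    rw [abs_mul, abs_pow, abs_pow, pow_add]
    exact mul_le_mul (hb m).1 (hb n).2 (by positivity) (by positivity)
  have h2 : |(s + a) ^ m * (s - a) ^ n| ≤ (|s| + a) ^ (m + n) := by
    rw [abs_mul, abs_pow, abs_pow, pow_add]
    exact mul_le_mul (hb m).2 (hb n).1 (by positivity) (by positivity)
  calc |(s - a) ^ m * (s + a) ^ n + (s + a) ^ m * (s - a) ^ n|
      ≤ |(s - a) ^ m * (s + a) ^ n| + |(s + a) ^ m * (s - a) ^ n| := abs_add_le _ _
    _ ≤ 2 * (|s| + a) ^ (m + n) := by linarith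
    _ ≤ 2 * ((m + n).factorial * Real.exp a * Real.exp 1 * Real.exp (1 * s ^ 2)) := by linarith
    _ = 2 * ((m + n).factorial * Real.exp a * Real.exp 1) * Real.exp (1 * s ^ 2) := by ring

lemma phi_integrable (χ : Measure ℝ) [IsFiniteMeasure χ]
    (hχexp : ∀ ϑ : ℝ, 0 < ϑ → Integrable (fun t => Real.exp (ϑ * t ^ 2)) χ)
    {a : ℝ} (ha : 0 < a) (m n : ℕ) :
    Integrable (fun s => (s - a) ^ m * (s + a) ^ n + (s + a) ^ m * (s - a) ^ n) χ := by
  apply Integrable.mono' (((hχexp 1 one_pos).const_mul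
      (2 * ((m + n).factorial * Real.exp a * Real.exp 1))))
  · apply Continuous.aestronglyMeasurable; continuity
  · exact Filter.Eventually.of_forall fun s => by
      simpa using phi_abs_bound a s ha.le m n




noncomputable def nu : Measure ℝ := (2 : ℝ≥0∞)⁻¹ • (Measure.dirac (-1) + Measure.dirac 1)

instance : IsProbabilityMeasure nu := by
  constructor
  simp only [nu, Measure.smul_apply, Measure.add_apply, measure_univ, smul_eq_mul,
    one_add_one_eq_two]
  exact ENNReal.inv_mul_cancel (by norm_num) (by norm_num)

lemma integrable_dirac' {f : ℝ → ℝ} (hf : Measurable f) (c : ℝ) :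
    Integrable f (Measure.dirac c) :=
  (integrable_const (f c)).congr (ae_eq_dirac' hf).symm

lemma integrable_nu {f : ℝ → ℝ} (hf : Measurable f) : Integrable f nu :=
  (((integrable_dirac' hf (-1)).add_measure (integrable_dirac' hf 1)).smul_measure
    (by norm_num : (2 : ℝ≥0∞)⁻¹ ≠ ⊤))

lemma integral_nu (f : ℝ → ℝ) (hf : Measurable f) :
    ∫ t, f t ∂nu = (f (-1) + f 1) / 2 := by
  rw [nu, integral_smul_measure,
    integral_add_measure (integrable_dirac' hf (-1)) (integrable_dirac' hf 1),
    integral_dirac, integral_dirac]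
  rw [show ((2:ℝ≥0∞)⁻¹).toReal = (2:ℝ)⁻¹ by simp, smul_eq_mul]
  ring

-- symmetry lemmas
lemma sym_set (χ : Measure ℝ) (hχsym : χ.map (fun t => -t) = χ)
    (S : Set ℝ) (hS : MeasurableSet S) : χ ((fun t : ℝ => -t) ⁻¹' S) = χ S := by
  conv_rhs => rw [← hχsym]
  rw [Measure.map_apply measurable_neg hS]

lemma sym_integral (χ : Measure ℝ) (hχsym : χ.map (fun t => -t) = χ)
    (f : ℝ → ℝ) (hf : AEStronglyMeasurable f χ) :
    ∫ s, f (-s) ∂χ = ∫ s, f s ∂χ := by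
  conv_rhs => rw [← hχsym]
  rw [integral_map measurable_neg.aemeasurable (by rwa [hχsym])]


section Phi
variable (χ : Measure ℝ) [IsFiniteMeasure χ]
  (hχsym : χ.map (fun t => -t) = χ)
  (hχexp : ∀ ϑ : ℝ, 0 < ϑ → Integrable (fun t => Real.exp (ϑ * t ^ 2)) χ)
  {a : ℝ} (ha : 0 < a)
  (hWells : χ (Set.Icc 0 a) ≤ χ (Set.Ici (a * Real.sqrt 2)))

include hχsym ha hWells in
lemma measure_compare :
    χ (Set.Icc (-a) a) ≤ χ ({s : ℝ | a * Real.sqrt 2 ≤ |s|}) := by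
  have hsub : Set.Icc (-a) a ⊆ Set.Icc (-a) 0 ∪ Set.Icc 0 a := by
    intro s hs
    rcases le_or_gt s 0 with h | h
    · exact Or.inl ⟨hs.1, h⟩
    · exact Or.inr ⟨h.le, hs.2⟩
  have hneg : χ (Set.Icc (-a) 0) = χ (Set.Icc 0 a) := by
    have : (fun t : ℝ => -t) ⁻¹' Set.Icc 0 a = Set.Icc (-a) 0 := by
      ext s
      simp only [Set.mem_preimage, Set.mem_Icc]
      constructor <;> rintro ⟨h1, h2⟩ <;> constructor <;> linarith
    rw [← this, sym_set χ hχsym _ measurableSet_Icc]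
  have h1 : χ (Set.Icc (-a) a) ≤ 2 * χ (Set.Icc 0 a) := by
    calc χ (Set.Icc (-a) a) ≤ χ (Set.Icc (-a) 0 ∪ Set.Icc 0 a) := measure_mono hsub
      _ ≤ χ (Set.Icc (-a) 0) + χ (Set.Icc 0 a) := measure_union_le _ _
      _ = 2 * χ (Set.Icc 0 a) := by rw [hneg, two_mul]
  have hset : {s : ℝ | a * Real.sqrt 2 ≤ |s|}
      = Set.Iic (-(a * Real.sqrt 2)) ∪ Set.Ici (a * Real.sqrt 2) := by
    ext s
    simp only [Set.mem_setOf_eq, Set.mem_union, Set.mem_Iic, Set.mem_Ici, le_abs, le_neg]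
    tauto
  have hIic : χ (Set.Iic (-(a * Real.sqrt 2))) = χ (Set.Ici (a * Real.sqrt 2)) := by
    have : (fun t : ℝ => -t) ⁻¹' Set.Ici (a * Real.sqrt 2) = Set.Iic (-(a * Real.sqrt 2)) := by
      ext s; simp [le_neg]
    rw [← this, sym_set χ hχsym _ measurableSet_Ici]
  have hpos : 0 < a * Real.sqrt 2 := mul_pos ha (Real.sqrt_pos.mpr (by norm_num))
  have hdisj : Disjoint (Set.Iic (-(a * Real.sqrt 2))) (Set.Ici (a * Real.sqrt 2)) :=
    Set.Iic_disjoint_Ici.mpr (by linarith)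
  rw [hset, measure_union hdisj measurableSet_Ici, hIic, ← two_mul]
  calc χ (Set.Icc (-a) a) ≤ 2 * χ (Set.Icc 0 a) := h1
    _ ≤ 2 * χ (Set.Ici (a * Real.sqrt 2)) := mul_le_mul_right hWells 2

include hχsym hχexp ha hWells in
lemma phi_oddodd {m n : ℕ} (hm : Odd m) (hn : Odd n) (hmn : m ≤ n) :
    0 ≤ ∫ s, ((s - a) ^ m * (s + a) ^ n + (s + a) ^ m * (s - a) ^ n) ∂χ := by
  set d := n - m with hd
  have hdeven : Even d := Nat.Odd.sub_odd hn hm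
  set g : ℝ → ℝ := fun s => (s + a) ^ d + (s - a) ^ d with hg
  set φ : ℝ → ℝ := fun s => (s - a) ^ m * (s + a) ^ n + (s + a) ^ m * (s - a) ^ n with hφ
  have hphig : ∀ s, φ s = (s ^ 2 - a ^ 2) ^ m * g s := fun s => phi_eq hmn a s
  have hs2 : (1:ℝ) < Real.sqrt 2 := by
    have := Real.sq_sqrt (by norm_num : (2:ℝ) ≥ 0)
    nlinarith [Real.sqrt_nonneg 2]
  have haa : a < a * Real.sqrt 2 := by nlinarith
  have habs : |a * Real.sqrt 2| = a * Real.sqrt 2 := abs_of_pos (by nlinarith)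
  have hsq2 : (a * Real.sqrt 2) ^ 2 = 2 * a ^ 2 := by
    rw [mul_pow, Real.sq_sqrt (by norm_num : (2:ℝ) ≥ 0)]; ring
  set B : ℝ := (a ^ 2) ^ m * g (a * Real.sqrt 2) with hB
  have hgnn : ∀ s, 0 ≤ g s := fun s => g_nonneg ha.le hdeven s
  have hBnn : 0 ≤ B := by
    apply mul_nonneg (by positivity) (hgnn _)
  -- three pointwise bounds
  have bd1 : ∀ s : ℝ, |s| ≤ a → -B ≤ φ s := by
    intro s hs
    rw [hphig]
    have hmneg : (s ^ 2 - a ^ 2) ^ m = -((a ^ 2 - s ^ 2) ^ m) := by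
      rw [show s ^ 2 - a ^ 2 = -(a ^ 2 - s ^ 2) by ring, hm.neg_pow]
    rw [hmneg, neg_mul, neg_le_neg_iff]
    have hs2a : s ^ 2 ≤ a ^ 2 := by
      rw [← sq_abs s]; exact pow_le_pow_left₀ (abs_nonneg s) hs 2
    apply mul_le_mul
    · exact pow_le_pow_left₀ (by linarith) (by nlinarith [sq_nonneg s]) m
    · exact g_mono ha.le hdeven (by rw [habs]; linarith)
    · exact hgnn s
    · positivity
  have bd2 : ∀ s : ℝ, a ≤ |s| → 0 ≤ φ s := by
    intro s hs
    rw [hphig]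
    have : a ^ 2 ≤ s ^ 2 := by
      rw [← sq_abs s]; exact pow_le_pow_left₀ ha.le hs 2
    exact mul_nonneg (pow_nonneg (by linarith) m) (hgnn s)
  have bd3 : ∀ s : ℝ, a * Real.sqrt 2 ≤ |s| → B ≤ φ s := by
    intro s hs
    rw [hphig, hB]
    have h2a : 2 * a ^ 2 ≤ s ^ 2 := by
      rw [← hsq2, ← sq_abs s]
      exact pow_le_pow_left₀ (by positivity) hs 2
    apply mul_le_mul
    · exact pow_le_pow_left₀ (by positivity) (by linarith) m
    · exact g_mono ha.le hdeven (by rw [habs]; exact hs)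
    · exact hgnn _
    · apply pow_nonneg; nlinarith
  -- lower function
  set S1 : Set ℝ := {s : ℝ | a * Real.sqrt 2 ≤ |s|} with hS1
  have hS1m : MeasurableSet S1 := measurableSet_le measurable_const measurable_abs
  set L : ℝ → ℝ := fun s => Set.indicator S1 (fun _ => B) s - Set.indicator (Set.Icc (-a) a) (fun _ => B) s with hL
  have hLle : ∀ s, L s ≤ φ s := by
    intro s
    rw [hL]
    rcases le_or_gt (|s|) a with h | h
    · have h1 : s ∉ S1 := by
        simp only [hS1, Set.mem_setOf_eq, not_le]; nlinarith
      have h2 : s ∈ Set.Icc (-a) a := by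
        rw [Set.mem_Icc]; constructor <;> [linarith [neg_abs_le s]; linarith [le_abs_self s]]
      simp only [Set.indicator_of_notMem h1, Set.indicator_of_mem h2]
      simpa using bd1 s h
    · have h2 : s ∉ Set.Icc (-a) a := by
        rw [Set.mem_Icc]; intro hc
        have := abs_le.mpr hc; linarith
      rcases le_or_gt (a * Real.sqrt 2) (|s|) with h3 | h3
      · have h1 : s ∈ S1 := h3
        simp only [Set.indicator_of_mem h1, Set.indicator_of_notMem h2]
        simpa using bd3 s h3
      · have h1 : s ∉ S1 := by simp [hS1, Set.mem_setOf_eq]; exact h3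
        simp only [Set.indicator_of_notMem h1, Set.indicator_of_notMem h2]
        simpa using bd2 s h.le
  have hLint : Integrable L χ :=
    ((integrable_const B).indicator hS1m).sub ((integrable_const B).indicator measurableSet_Icc)
  have hφint : Integrable φ χ := phi_integrable χ hχexp ha m n
  have hIL : 0 ≤ ∫ s, L s ∂χ := by
    rw [hL]
    rw [integral_sub ((integrable_const B).indicator hS1m)
      ((integrable_const B).indicator measurableSet_Icc)]
    rw [integral_indicator_const _ hS1m, integral_indicator_const _ measurableSet_Icc]
    have hcomp := measure_compare χ hχsym ha hWells
    have hle : (χ (Set.Icc (-a) a)).toReal ≤ (χ S1).toReal :=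
      ENNReal.toReal_mono (measure_ne_top _ _) hcomp
    have : (χ S1).toReal • B - (χ (Set.Icc (-a) a)).toReal • B
        = ((χ S1).toReal - (χ (Set.Icc (-a) a)).toReal) * B := by
      simp [smul_eq_mul]; ring
    rw [measureReal_def, measureReal_def, this]
    exact mul_nonneg (by linarith) hBnn
  calc (0:ℝ) ≤ ∫ s, L s ∂χ := hIL
    _ ≤ ∫ s, φ s ∂χ := integral_mono hLint hφint hLle


include hχsym hχexp ha hWells in
lemma phi_nonneg (m n : ℕ) :
    0 ≤ ∫ s, ((s - a) ^ m * (s + a) ^ n + (s + a) ^ m * (s - a) ^ n) ∂χ := by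
  rcases Nat.even_or_odd m with hm | hm <;> rcases Nat.even_or_odd n with hn | hn
  · -- both even : pointwise nonneg
    apply integral_nonneg
    intro s
    have h1 := hm.pow_nonneg (s - a)
    have h2 := hn.pow_nonneg (s + a)
    have h3 := hm.pow_nonneg (s + a)
    have h4 := hn.pow_nonneg (s - a)
    positivity
  · -- even, odd : integrand odd, integral zero
    have hodd : ∀ s : ℝ, ((-s) - a) ^ m * ((-s) + a) ^ n + ((-s) + a) ^ m * ((-s) - a) ^ n
        = -(((s - a) ^ m * (s + a) ^ n + (s + a) ^ m * (s - a) ^ n)) := by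
      intro s
      rw [show (-s) - a = -(s + a) by ring, show (-s) + a = -(s - a) by ring,
        hm.neg_pow, hm.neg_pow, hn.neg_pow, hn.neg_pow]
      ring
    have hint := sym_integral χ hχsym
      (fun s => (s - a) ^ m * (s + a) ^ n + (s + a) ^ m * (s - a) ^ n)
      (Continuous.aestronglyMeasurable (by continuity))
    rw [show (fun s : ℝ => ((-s) - a) ^ m * ((-s) + a) ^ n + ((-s) + a) ^ m * ((-s) - a) ^ n)
        = fun s : ℝ => -(((s - a) ^ m * (s + a) ^ n + (s + a) ^ m * (s - a) ^ n)) from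
        funext hodd] at hint
    rw [integral_neg] at hint
    linarith
  · -- odd, even : same trick
    have hodd : ∀ s : ℝ, ((-s) - a) ^ m * ((-s) + a) ^ n + ((-s) + a) ^ m * ((-s) - a) ^ n
        = -(((s - a) ^ m * (s + a) ^ n + (s + a) ^ m * (s - a) ^ n)) := by
      intro s
      rw [show (-s) - a = -(s + a) by ring, show (-s) + a = -(s - a) by ring,
        hm.neg_pow, hm.neg_pow, hn.neg_pow, hn.neg_pow]
      ring
    have hint := sym_integral χ hχsym
      (fun s => (s - a) ^ m * (s + a) ^ n + (s + a) ^ m * (s - a) ^ n)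
      (Continuous.aestronglyMeasurable (by continuity))
    rw [show (fun s : ℝ => ((-s) - a) ^ m * ((-s) + a) ^ n + ((-s) + a) ^ m * ((-s) - a) ^ n)
        = fun s : ℝ => -(((s - a) ^ m * (s + a) ^ n + (s + a) ^ m * (s - a) ^ n)) from
        funext hodd] at hint
    rw [integral_neg] at hint
    linarith
  · -- both odd
    rcases le_total m n with hmn | hmn
    · exact phi_oddodd χ hχsym hχexp ha hWells hm hn hmn
    · have := phi_oddodd χ hχsym hχexp ha hWells hn hm hmn
      have heq : ∀ s : ℝ, (s - a) ^ n * (s + a) ^ m + (s + a) ^ n * (s - a) ^ m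
          = (s - a) ^ m * (s + a) ^ n + (s + a) ^ m * (s - a) ^ n := fun s => by ring
      rwa [show (fun s : ℝ => (s - a) ^ n * (s + a) ^ m + (s + a) ^ n * (s - a) ^ m)
          = fun s : ℝ => (s - a) ^ m * (s + a) ^ n + (s + a) ^ m * (s - a) ^ n from
          funext heq] at this

end Phi

section Engine
variable {V : Type*} [Fintype V] [DecidableEq V]

/-- first coordinate spin minus `a` times second -/
def uu (a : ℝ) (y : V) (p : (V → ℝ) × (V → ℝ)) : ℝ := p.1 y - a * p.2 y
def vv (a : ℝ) (y : V) (p : (V → ℝ) × (V → ℝ)) : ℝ := p.1 y + a * p.2 y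

noncomputable def mono (a : ℝ) (e : V → ℕ × ℕ) (p : (V → ℝ) × (V → ℝ)) : ℝ :=
  ∏ y, (uu a y p ^ (e y).1 * vv a y p ^ (e y).2)

lemma mono_add (a : ℝ) (e f : V → ℕ × ℕ) (p : (V → ℝ) × (V → ℝ)) :
    mono a (e + f) p = mono a e p * mono a f p := by
  unfold mono
  rw [← Finset.prod_mul_distrib]
  apply Finset.prod_congr rfl
  intro y _
  simp only [Pi.add_apply, Prod.fst_add, Prod.snd_add, pow_add]
  ring

lemma mono_sum (a : ℝ) {ι : Type*} (s : Finset ι) (E : ι → V → ℕ × ℕ)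
    (p : (V → ℝ) × (V → ℝ)) :
    mono a (∑ j ∈ s, E j) p = ∏ j ∈ s, mono a (E j) p := by
  induction s using Finset.cons_induction with
  | empty => simp [mono]
  | cons j s hj ih => rw [Finset.sum_cons, Finset.prod_cons, mono_add, ih]

lemma mono_single_u (a : ℝ) (y : V) (p : (V → ℝ) × (V → ℝ)) :
    mono a (fun w => if w = y then ((1 : ℕ), (0 : ℕ)) else 0) p = uu a y p := by
  unfold mono
  rw [Finset.prod_eq_single y]
  · simp
  · intro b _ hb
    simp [hb]
  · intro h
    exact absurd (Finset.mem_univ y) h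

lemma mono_single_v (a : ℝ) (y : V) (p : (V → ℝ) × (V → ℝ)) :
    mono a (fun w => if w = y then ((0 : ℕ), (1 : ℕ)) else 0) p = vv a y p := by
  unfold mono
  rw [Finset.prod_eq_single y]
  · simp
  · intro b _ hb
    simp [hb]
  · intro h
    exact absurd (Finset.mem_univ y) h

lemma uu_continuous (a : ℝ) (y : V) : Continuous (uu a y) := by
  unfold uu; fun_prop

lemma vv_continuous (a : ℝ) (y : V) : Continuous (vv a y) := by
  unfold vv; fun_prop

lemma mono_continuous (a : ℝ) (e : V → ℕ × ℕ) : Continuous (mono a e) :=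
  continuous_finset_prod _ fun y _ =>
    ((uu_continuous a y).pow _).mul ((vv_continuous a y).pow _)


end Engine

section Engine2
variable {V : Type*} [Fintype V] [DecidableEq V]

lemma mono_bound {a : ℝ} (ha : 0 < a) (e : V → ℕ × ℕ) (p : (V → ℝ) × (V → ℝ)) :
    |mono a e p| ≤ (∏ y, ((((e y).1 + (e y).2).factorial : ℝ) * Real.exp 2))
      * ((∏ y, Real.exp ((p.1 y) ^ 2)) * (∏ y, Real.exp (a ^ 2 * (p.2 y) ^ 2))) := by
  have factor : ∀ y : V, |uu a y p ^ (e y).1 * vv a y p ^ (e y).2|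
      ≤ ((((e y).1 + (e y).2).factorial : ℝ) * Real.exp 2)
        * (Real.exp ((p.1 y) ^ 2) * Real.exp (a ^ 2 * (p.2 y) ^ 2)) := by
    intro y
    set m := (e y).1; set n := (e y).2
    have hu : |uu a y p| ≤ |p.1 y| + a * |p.2 y| := by
      unfold uu
      calc |p.1 y - a * p.2 y| ≤ |p.1 y| + |a * p.2 y| := abs_sub _ _
        _ = |p.1 y| + a * |p.2 y| := by rw [abs_mul, abs_of_pos ha]
    have hv : |vv a y p| ≤ |p.1 y| + a * |p.2 y| := by
      unfold vv
      calc |p.1 y + a * p.2 y| ≤ |p.1 y| + |a * p.2 y| := abs_add_le _ _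
        _ = |p.1 y| + a * |p.2 y| := by rw [abs_mul, abs_of_pos ha]
    have hw : (0:ℝ) ≤ |p.1 y| + a * |p.2 y| := by positivity
    have h1 : |uu a y p ^ m * vv a y p ^ n| ≤ (|p.1 y| + a * |p.2 y|) ^ (m + n) := by
      rw [abs_mul, abs_pow, abs_pow, pow_add]
      exact mul_le_mul (pow_le_pow_left₀ (abs_nonneg _) hu m)
        (pow_le_pow_left₀ (abs_nonneg _) hv n) (by positivity) (by positivity)
    have h2 : (|p.1 y| + a * |p.2 y|) ^ (m + n)
        ≤ ((m + n).factorial : ℝ) * Real.exp (|p.1 y| + a * |p.2 y|) :=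
      pow_le_fact_exp _ hw _
    have h3 : |p.1 y| + a * |p.2 y| ≤ (p.1 y) ^ 2 + a ^ 2 * (p.2 y) ^ 2 + 2 := by
      have e1 : |p.1 y| ≤ 1 + (p.1 y) ^ 2 := abs_le_one_add_sq _
      have e2 : a * |p.2 y| = |a * p.2 y| := by rw [abs_mul, abs_of_pos ha]
      have e3 : |a * p.2 y| ≤ 1 + (a * p.2 y) ^ 2 := abs_le_one_add_sq _
      have e4 : (a * p.2 y) ^ 2 = a ^ 2 * (p.2 y) ^ 2 := by ring
      linarith [e3, e1, e4 ▸ e3]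
    calc |uu a y p ^ m * vv a y p ^ n|
        ≤ ((m + n).factorial : ℝ) * Real.exp (|p.1 y| + a * |p.2 y|) := h1.trans h2
      _ ≤ ((m + n).factorial : ℝ) * Real.exp ((p.1 y) ^ 2 + a ^ 2 * (p.2 y) ^ 2 + 2) := by
          have := Real.exp_le_exp.mpr h3
          have hf : (0:ℝ) ≤ ((m + n).factorial : ℝ) := by positivity
          nlinarith
      _ = (((m + n).factorial : ℝ) * Real.exp 2)
          * (Real.exp ((p.1 y) ^ 2) * Real.exp (a ^ 2 * (p.2 y) ^ 2)) := by
          rw [Real.exp_add, Real.exp_add]; ring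
  calc |mono a e p| = ∏ y, |uu a y p ^ (e y).1 * vv a y p ^ (e y).2| := by
        rw [mono, Finset.abs_prod]
    _ ≤ ∏ y, (((((e y).1 + (e y).2).factorial : ℝ) * Real.exp 2)
          * (Real.exp ((p.1 y) ^ 2) * Real.exp (a ^ 2 * (p.2 y) ^ 2))) :=
        Finset.prod_le_prod (fun y _ => abs_nonneg _) (fun y _ => factor y)
    _ = _ := by
        rw [Finset.prod_mul_distrib, Finset.prod_mul_distrib, Finset.prod_mul_distrib]

variable (χ : Measure ℝ) [IsFiniteMeasure χ]

lemma dom_integrable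
    (hχexp : ∀ ϑ : ℝ, 0 < ϑ → Integrable (fun t => Real.exp (ϑ * t ^ 2)) χ)
    {θ1 θ2 : ℝ} (h1 : 0 < θ1) (h2 : 0 < θ2) :
    Integrable (fun p : (V → ℝ) × (V → ℝ) =>
      (∏ y, Real.exp (θ1 * (p.1 y) ^ 2)) * (∏ y, Real.exp (θ2 * (p.2 y) ^ 2)))
      ((Measure.pi fun _ : V => χ).prod (Measure.pi fun _ : V => nu)) := by
  exact Integrable.mul_prod (f := fun σ : V → ℝ => ∏ y, Real.exp (θ1 * (σ y) ^ 2))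
    (g := fun τ : V → ℝ => ∏ y, Real.exp (θ2 * (τ y) ^ 2))
    (integrable_pi_prod χ _ (fun y => hχexp θ1 h1))
    (integrable_pi_prod nu (fun _ t => Real.exp (θ2 * t ^ 2))
      (fun y => integrable_nu (by fun_prop)))

lemma mono_integrable
    (hχexp : ∀ ϑ : ℝ, 0 < ϑ → Integrable (fun t => Real.exp (ϑ * t ^ 2)) χ)
    {a : ℝ} (ha : 0 < a) (e : V → ℕ × ℕ) :
    Integrable (mono a e)
      ((Measure.pi fun _ : V => χ).prod (Measure.pi fun _ : V => nu)) := by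
  have hd := dom_integrable χ hχexp (V := V) one_pos (pow_pos ha 2)
  apply Integrable.mono'
    ((hd.const_mul (∏ y : V, ((((e y).1 + (e y).2).factorial : ℝ) * Real.exp 2))))
  · exact (mono_continuous a e).aestronglyMeasurable
  · apply Filter.Eventually.of_forall
    intro p
    rw [Real.norm_eq_abs]
    have := mono_bound ha e p
    calc |mono a e p| ≤ (∏ y, ((((e y).1 + (e y).2).factorial : ℝ) * Real.exp 2))
        * ((∏ y, Real.exp ((p.1 y) ^ 2)) * (∏ y, Real.exp (a ^ 2 * (p.2 y) ^ 2))) := this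
      _ = _ := by
        simp [one_mul]

lemma integral_mono_nonneg
    (hχsym : χ.map (fun t => -t) = χ)
    (hχexp : ∀ ϑ : ℝ, 0 < ϑ → Integrable (fun t => Real.exp (ϑ * t ^ 2)) χ)
    {a : ℝ} (ha : 0 < a)
    (hWells : χ (Set.Icc 0 a) ≤ χ (Set.Ici (a * Real.sqrt 2)))
    (e : V → ℕ × ℕ) :
    0 ≤ ∫ p, mono a e p
        ∂((Measure.pi fun _ : V => χ).prod (Measure.pi fun _ : V => nu)) := by
  rw [MeasureTheory.integral_prod _ (mono_integrable χ hχexp ha e)]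
  have inner : ∀ σ : V → ℝ, (∫ τ, mono a e (σ, τ) ∂(Measure.pi fun _ : V => nu))
      = ∏ y, (((σ y - a) ^ (e y).1 * (σ y + a) ^ (e y).2
          + (σ y + a) ^ (e y).1 * (σ y - a) ^ (e y).2) / 2) := by
    intro σ
    have hrfl : (fun τ : V → ℝ => mono a e (σ, τ))
        = fun τ => ∏ y, ((σ y - a * τ y) ^ (e y).1 * (σ y + a * τ y) ^ (e y).2) := rfl
    rw [hrfl, integral_pi_prod nu
      (fun y t => (σ y - a * t) ^ (e y).1 * (σ y + a * t) ^ (e y).2)]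
    apply Finset.prod_congr rfl
    intro y _
    rw [integral_nu _ (by fun_prop)]
    ring_nf
  rw [show (fun σ : V → ℝ => ∫ τ, mono a e (σ, τ) ∂(Measure.pi fun _ : V => nu))
      = fun σ => ∏ y, (((σ y - a) ^ (e y).1 * (σ y + a) ^ (e y).2
          + (σ y + a) ^ (e y).1 * (σ y - a) ^ (e y).2) / 2) from funext inner]
  rw [integral_pi_prod χ (fun y s => ((s - a) ^ (e y).1 * (s + a) ^ (e y).2
      + (s + a) ^ (e y).1 * (s - a) ^ (e y).2) / 2)]
  apply Finset.prod_nonneg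
  intro y _
  rw [integral_div]
  exact div_nonneg (phi_nonneg χ hχsym hχexp ha hWells (e y).1 (e y).2) (by norm_num)

end Engine2

section Engine3
variable {V : Type*} [Fintype V] [DecidableEq V]

/-- index type for the terms of the combined Hamiltonian -/
abbrev Idx (V : Type*) := (V × V) ⊕ ((V × V) ⊕ V)

variable (J : V → V → ℝ) (K : V → ℝ)

noncomputable def co : Idx V → ℝ :=
  Sum.elim (fun yz => J yz.1 yz.2 / 4) (Sum.elim (fun yz => J yz.1 yz.2 / 4) K)

def xe (x : V) : V → ℕ × ℕ := fun w => if w = x then ((1 : ℕ), (0 : ℕ)) else 0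
def ye (x : V) : V → ℕ × ℕ := fun w => if w = x then ((0 : ℕ), (1 : ℕ)) else 0

def Ex : Idx V → V → ℕ × ℕ :=
  Sum.elim (fun yz => xe yz.1 + xe yz.2) (Sum.elim (fun yz => ye yz.1 + ye yz.2) ye)

lemma co_nonneg (hJnn : ∀ y z, 0 ≤ J y z) (hK : ∀ y, 0 ≤ K y) (i : Idx V) : 0 ≤ co J K i := by
  rcases i with yz | yz | y
  · exact div_nonneg (hJnn _ _) (by norm_num)
  · exact div_nonneg (hJnn _ _) (by norm_num)
  · exact hK y

variable (a : ℝ)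

lemma mono_xe (x : V) (p : (V → ℝ) × (V → ℝ)) : mono a (xe x) p = uu a x p := by
  unfold xe; rw [mono_single_u]

lemma mono_Ex_inl (yz : V × V) (p : (V → ℝ) × (V → ℝ)) :
    mono a (Ex (Sum.inl yz)) p = uu a yz.1 p * uu a yz.2 p := by
  show mono a (xe yz.1 + xe yz.2) p = _
  rw [mono_add]
  unfold xe
  rw [mono_single_u, mono_single_u]

lemma mono_Ex_inrl (yz : V × V) (p : (V → ℝ) × (V → ℝ)) :
    mono a (Ex (Sum.inr (Sum.inl yz))) p = vv a yz.1 p * vv a yz.2 p := by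
  show mono a (ye yz.1 + ye yz.2) p = _
  rw [mono_add]
  unfold ye
  rw [mono_single_v, mono_single_v]

lemma mono_Ex_inrr (y : V) (p : (V → ℝ) × (V → ℝ)) :
    mono a (Ex (Sum.inr (Sum.inr y))) p = vv a y p := by
  show mono a (ye y) p = _
  unfold ye
  rw [mono_single_v]

/-- the combined Hamiltonian -/
noncomputable def Qf (p : (V → ℝ) × (V → ℝ)) : ℝ := ∑ i : Idx V, co J K i * mono a (Ex i) p

lemma Qf_continuous : Continuous (Qf J K a) :=
  continuous_finset_sum _ fun i _ => continuous_const.mul (mono_continuous a (Ex i))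

/-- the combined Hamiltonian equals the sum of the two original Hamiltonians -/
lemma Qf_eq (p : (V → ℝ) × (V → ℝ)) :
    Qf J K a p = (1 / 2 * ∑ y, ∑ z, J y z * p.1 y * p.1 z + ∑ y, K y * p.1 y)
      + (a ^ 2 / 2 * ∑ y, ∑ z, J y z * p.2 y * p.2 z + a * ∑ y, K y * p.2 y) := by
  have lhs1 : Qf J K a p
      = ∑ y, ∑ z, (J y z / 4 * (uu a y p * uu a z p) + J y z / 4 * (vv a y p * vv a z p))
        + ∑ y, K y * vv a y p := by
    rw [Qf, Fintype.sum_sum_type, Fintype.sum_sum_type]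
    simp only [co, Sum.elim_inl, Sum.elim_inr, mono_Ex_inl, mono_Ex_inrl, mono_Ex_inrr]
    rw [Fintype.sum_prod_type, Fintype.sum_prod_type, ← add_assoc, ← Finset.sum_add_distrib]
    congr 1
    apply Finset.sum_congr rfl
    intro y _
    rw [← Finset.sum_add_distrib]
  rw [lhs1]
  have key : ∀ y z : V, J y z / 4 * (uu a y p * uu a z p) + J y z / 4 * (vv a y p * vv a z p)
      = 1 / 2 * (J y z * p.1 y * p.1 z) + a ^ 2 / 2 * (J y z * p.2 y * p.2 z) := by
    intro y z; unfold uu vv; ring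
  have key2 : ∀ y : V, K y * vv a y p = K y * p.1 y + a * (K y * p.2 y) := by
    intro y; unfold vv; ring
  rw [Finset.sum_congr rfl fun y _ => Finset.sum_congr rfl fun z _ => key y z,
    Finset.sum_congr rfl fun y (_ : y ∈ Finset.univ) => key2 y]
  rw [Finset.sum_add_distrib]
  rw [show (∑ y : V, ∑ z : V, (1 / 2 * (J y z * p.1 y * p.1 z)
        + a ^ 2 / 2 * (J y z * p.2 y * p.2 z)))
      = ∑ y : V, ((∑ z : V, 1 / 2 * (J y z * p.1 y * p.1 z))
        + ∑ z : V, a ^ 2 / 2 * (J y z * p.2 y * p.2 z)) from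
    Finset.sum_congr rfl fun y _ => Finset.sum_add_distrib]
  rw [Finset.sum_add_distrib]
  simp only [← Finset.mul_sum]
  ring

lemma Q_pow_expand (x : V) (k : ℕ) (p : (V → ℝ) × (V → ℝ)) :
    uu a x p * (Qf J K a p) ^ k
      = ∑ q ∈ Fintype.piFinset (fun _ : Fin k => (Finset.univ : Finset (Idx V))),
          ((∏ j, co J K (q j)) * mono a (xe x + ∑ j, Ex (q j)) p) := by
  have h1 : (Qf J K a p) ^ k = ∏ _j : Fin k, Qf J K a p := by
    rw [Finset.prod_const]; simp
  rw [h1]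
  unfold Qf
  rw [Finset.prod_univ_sum, Finset.mul_sum]
  apply Finset.sum_congr rfl
  intro q _
  rw [Finset.prod_mul_distrib, mono_add, mono_sum, mono_xe]
  ring

end Engine3

section Engine4
variable {V : Type*} [Fintype V] [DecidableEq V]
  (J : V → V → ℝ) (K : V → ℝ) (a : ℝ)

noncomputable def Wf (p : (V → ℝ) × (V → ℝ)) : ℝ := ∑ y, ((p.1 y) ^ 2 + a ^ 2 * (p.2 y) ^ 2)

lemma Wf_nonneg (p : (V → ℝ) × (V → ℝ)) : 0 ≤ Wf (V := V) a p :=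
  Finset.sum_nonneg fun y _ => by positivity

lemma uu_sq_le (y : V) (p : (V → ℝ) × (V → ℝ)) : (uu a y p) ^ 2 ≤ 2 * Wf a p := by
  have hterm : (p.1 y) ^ 2 + a ^ 2 * (p.2 y) ^ 2 ≤ Wf a p :=
    Finset.single_le_sum (f := fun y => (p.1 y) ^ 2 + a ^ 2 * (p.2 y) ^ 2)
      (fun y _ => by positivity) (Finset.mem_univ y)
  unfold uu
  nlinarith [sq_nonneg (p.1 y + a * p.2 y)]

lemma vv_sq_le (y : V) (p : (V → ℝ) × (V → ℝ)) : (vv a y p) ^ 2 ≤ 2 * Wf a p := by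
  have hterm : (p.1 y) ^ 2 + a ^ 2 * (p.2 y) ^ 2 ≤ Wf a p :=
    Finset.single_le_sum (f := fun y => (p.1 y) ^ 2 + a ^ 2 * (p.2 y) ^ 2)
      (fun y _ => by positivity) (Finset.mem_univ y)
  unfold vv
  nlinarith [sq_nonneg (p.1 y - a * p.2 y)]

lemma mono_Ex_abs_le (i : Idx V) (p : (V → ℝ) × (V → ℝ)) :
    |mono a (Ex i) p| ≤ 1 + 2 * Wf a p := by
  have hW := Wf_nonneg (V := V) a p
  rcases i with yz | yz | y
  · rw [mono_Ex_inl]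
    have h1 := uu_sq_le a yz.1 p
    have h2 := uu_sq_le a yz.2 p
    have := abs_mul (uu a yz.1 p) (uu a yz.2 p)
    nlinarith [sq_nonneg (|uu a yz.1 p| - |uu a yz.2 p|), sq_abs (uu a yz.1 p),
      sq_abs (uu a yz.2 p), abs_nonneg (uu a yz.1 p), abs_nonneg (uu a yz.2 p)]
  · rw [mono_Ex_inrl]
    have h1 := vv_sq_le a yz.1 p
    have h2 := vv_sq_le a yz.2 p
    nlinarith [abs_mul (vv a yz.1 p) (vv a yz.2 p), sq_nonneg (|vv a yz.1 p| - |vv a yz.2 p|),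
      sq_abs (vv a yz.1 p), sq_abs (vv a yz.2 p), abs_nonneg (vv a yz.1 p),
      abs_nonneg (vv a yz.2 p)]
  · rw [mono_Ex_inrr]
    have h1 := vv_sq_le a y p
    have := abs_le_one_add_sq (vv a y p)
    nlinarith

lemma Qf_abs_le (hJnn : ∀ y z, 0 ≤ J y z) (hK : ∀ y, 0 ≤ K y) (p : (V → ℝ) × (V → ℝ)) :
    |Qf J K a p| ≤ (∑ i, co J K i) * (1 + 2 * Wf a p) := by
  calc |Qf J K a p| ≤ ∑ i, |co J K i * mono a (Ex i) p| :=
        Finset.abs_sum_le_sum_abs _ _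
    _ ≤ ∑ i, co J K i * (1 + 2 * Wf a p) := by
        apply Finset.sum_le_sum
        intro i _
        rw [abs_mul, abs_of_nonneg (co_nonneg J K hJnn hK i)]
        exact mul_le_mul_of_nonneg_left (mono_Ex_abs_le a i p) (co_nonneg J K hJnn hK i)
    _ = _ := by rw [← Finset.sum_mul]

variable (χ : Measure ℝ) [IsFiniteMeasure χ]

theorem integral_uu_exp_nonneg
    (hχsym : χ.map (fun t => -t) = χ)
    (hχexp : ∀ ϑ : ℝ, 0 < ϑ → Integrable (fun t => Real.exp (ϑ * t ^ 2)) χ)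
    (ha : 0 < a)
    (hWells : χ (Set.Icc 0 a) ≤ χ (Set.Ici (a * Real.sqrt 2)))
    (hJnn : ∀ y z, 0 ≤ J y z) (hK : ∀ y, 0 ≤ K y) (x : V) :
    0 ≤ ∫ p, uu a x p * Real.exp (Qf J K a p)
        ∂((Measure.pi fun _ : V => χ).prod (Measure.pi fun _ : V => nu)) := by
  set P := (Measure.pi fun _ : V => χ).prod (Measure.pi fun _ : V => nu) with hP
  set CS := ∑ i, co J K i with hCS
  have hCSnn : 0 ≤ CS := Finset.sum_nonneg fun i _ => co_nonneg J K hJnn hK i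
  set θ : ℝ := 2 + 2 * CS with hθdef
  have hθ : 0 < θ := by positivity
  set D : (V → ℝ) × (V → ℝ) → ℝ := fun p => Real.exp CS *
      ((∏ y, Real.exp (θ * (p.1 y) ^ 2)) * (∏ y, Real.exp (θ * a ^ 2 * (p.2 y) ^ 2))) with hD
  have hDint : Integrable D P :=
    (dom_integrable χ hχexp hθ (mul_pos hθ (pow_pos ha 2))).const_mul _
  have expW : ∀ p : (V → ℝ) × (V → ℝ), Real.exp (θ * Wf a p)
      = (∏ y, Real.exp (θ * (p.1 y) ^ 2)) * (∏ y, Real.exp (θ * a ^ 2 * (p.2 y) ^ 2)) := by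
    intro p
    have h1 : θ * Wf a p = (∑ y, θ * (p.1 y) ^ 2) + ∑ y, θ * a ^ 2 * (p.2 y) ^ 2 := by
      rw [Wf, Finset.mul_sum, ← Finset.sum_add_distrib]
      exact Finset.sum_congr rfl fun y _ => by ring
    rw [h1, Real.exp_add, Real.exp_sum, Real.exp_sum]
  have key : ∀ (p : (V → ℝ) × (V → ℝ)) (S : ℝ), |S| ≤ Real.exp |Qf J K a p| →
      |uu a x p * S| ≤ D p := by
    intro p S hS
    have hW := Wf_nonneg (V := V) a p
    have huu : |uu a x p| ≤ Real.exp (2 * Wf a p) := by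
      have h1 : |uu a x p| ≤ 1 + (uu a x p) ^ 2 := abs_le_one_add_sq _
      have h2 : (uu a x p) ^ 2 ≤ 2 * Wf a p := uu_sq_le a x p
      have h3 : 2 * Wf a p + 1 ≤ Real.exp (2 * Wf a p) := Real.add_one_le_exp _
      linarith
    have hQ : |Qf J K a p| ≤ CS * (1 + 2 * Wf a p) := Qf_abs_le J K a hJnn hK p
    have hexpQ : Real.exp |Qf J K a p| ≤ Real.exp (CS + 2 * CS * Wf a p) := by
      apply Real.exp_le_exp.mpr
      nlinarith
    calc |uu a x p * S| = |uu a x p| * |S| := abs_mul _ _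
      _ ≤ Real.exp (2 * Wf a p) * Real.exp (CS + 2 * CS * Wf a p) := by
          apply mul_le_mul huu (hS.trans hexpQ) (abs_nonneg _) (Real.exp_nonneg _)
      _ = Real.exp CS * Real.exp (θ * Wf a p) := by
          rw [← Real.exp_add, ← Real.exp_add]
          congr 1
          rw [hθdef]
          ring
      _ = D p := by rw [hD, expW]
  -- integrability and positivity of each power term
  have hFint : ∀ k : ℕ, Integrable (fun p => uu a x p * (Qf J K a p) ^ k) P := by
    intro k
    rw [show (fun p => uu a x p * (Qf J K a p) ^ k)
        = fun p => ∑ q ∈ Fintype.piFinset (fun _ : Fin k => (Finset.univ : Finset (Idx V))),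
            ((∏ j, co J K (q j)) * mono a (xe x + ∑ j, Ex (q j)) p) from
      funext (Q_pow_expand J K a x k)]
    exact integrable_finset_sum _ fun q _ => (mono_integrable χ hχexp ha _).const_mul _
  have hFk : ∀ k : ℕ, 0 ≤ ∫ p, uu a x p * (Qf J K a p) ^ k ∂P := by
    intro k
    rw [show (fun p => uu a x p * (Qf J K a p) ^ k)
        = fun p => ∑ q ∈ Fintype.piFinset (fun _ : Fin k => (Finset.univ : Finset (Idx V))),
            ((∏ j, co J K (q j)) * mono a (xe x + ∑ j, Ex (q j)) p) from
      funext (Q_pow_expand J K a x k)]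
    rw [integral_finset_sum _ fun q _ => (mono_integrable χ hχexp ha _).const_mul _]
    apply Finset.sum_nonneg
    intro q _
    rw [MeasureTheory.integral_const_mul]
    exact mul_nonneg (Finset.prod_nonneg fun j _ => co_nonneg J K hJnn hK (q j))
      (integral_mono_nonneg χ hχsym hχexp ha hWells _)
  -- dominated convergence
  set F : ℕ → (V → ℝ) × (V → ℝ) → ℝ :=
    fun N p => uu a x p * ∑ k ∈ Finset.range N, (Qf J K a p) ^ k / k.factorial with hF
  have hlim : Filter.Tendsto (fun N => ∫ p, F N p ∂P) Filter.atTop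
      (nhds (∫ p, uu a x p * Real.exp (Qf J K a p) ∂P)) := by
    apply MeasureTheory.tendsto_integral_of_dominated_convergence D
    · intro n
      apply Continuous.aestronglyMeasurable
      exact (uu_continuous a x).mul (continuous_finset_sum _ fun k _ =>
        ((Qf_continuous J K a).pow k).div_const _)
    · exact hDint
    · intro N
      apply Filter.Eventually.of_forall
      intro p
      rw [Real.norm_eq_abs]
      apply key
      calc |∑ k ∈ Finset.range N, (Qf J K a p) ^ k / k.factorial|
          ≤ ∑ k ∈ Finset.range N, |(Qf J K a p) ^ k / k.factorial| :=
            Finset.abs_sum_le_sum_abs _ _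
        _ = ∑ k ∈ Finset.range N, |Qf J K a p| ^ k / k.factorial := by
            apply Finset.sum_congr rfl
            intro k _
            rw [abs_div, abs_pow, Nat.abs_cast]
        _ ≤ Real.exp |Qf J K a p| := Real.sum_le_exp_of_nonneg (abs_nonneg _) N
    · apply Filter.Eventually.of_forall
      intro p
      have hs : HasSum (fun n => (Qf J K a p) ^ n / n.factorial) (Real.exp (Qf J K a p)) := by
        rw [Real.exp_eq_exp_ℝ]
        exact NormedSpace.expSeries_div_hasSum_exp (Qf J K a p)
      exact hs.tendsto_sum_nat.const_mul (uu a x p)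
  have hFN : ∀ N, 0 ≤ ∫ p, F N p ∂P := by
    intro N
    have heq : F N = fun p => ∑ k ∈ Finset.range N, (uu a x p * (Qf J K a p) ^ k) / k.factorial := by
      funext p
      simp only [hF]
      rw [Finset.mul_sum]
      exact Finset.sum_congr rfl fun k _ => by ring
    rw [heq]
    rw [integral_finset_sum _ fun k _ => (hFint k).div_const _]
    apply Finset.sum_nonneg
    intro k _
    rw [integral_div]
    exact div_nonneg (hFk k) (Nat.cast_nonneg _)
  exact ge_of_tendsto' hlim hFN

end Engine4

section Engine5
variable {V : Type*} [Fintype V]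

lemma ham_abs_le (J : V → V → ℝ) (K : V → ℝ) (hJnn : ∀ y z, 0 ≤ J y z) (hK : ∀ y, 0 ≤ K y)
    {c0 c1 : ℝ} (hc0 : 0 ≤ c0) (hc1 : 0 ≤ c1) (σ : V → ℝ) :
    |c0 * ∑ y, ∑ z, J y z * σ y * σ z + c1 * ∑ y, K y * σ y|
      ≤ (c0 * (∑ y, ∑ z, J y z) + c1 * ∑ y, K y) * (1 + ∑ y, (σ y) ^ 2) := by
  set W1 := ∑ y, (σ y) ^ 2 with hW1
  have hWnn : 0 ≤ W1 := Finset.sum_nonneg fun y _ => sq_nonneg _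
  have hsq : ∀ y : V, (σ y) ^ 2 ≤ W1 :=
    fun y => Finset.single_le_sum (f := fun y => (σ y) ^ 2) (fun y _ => sq_nonneg _)
      (Finset.mem_univ y)
  have h1 : |∑ y, ∑ z, J y z * σ y * σ z| ≤ (∑ y, ∑ z, J y z) * W1 := by
    rw [Finset.sum_mul]
    calc |∑ y, ∑ z, J y z * σ y * σ z| ≤ ∑ y, |∑ z, J y z * σ y * σ z| :=
          Finset.abs_sum_le_sum_abs _ _
      _ ≤ ∑ y, ∑ z, |J y z * σ y * σ z| := by
          exact Finset.sum_le_sum fun y _ => Finset.abs_sum_le_sum_abs _ _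
      _ ≤ ∑ y, (∑ z, J y z) * W1 := by
          apply Finset.sum_le_sum
          intro y _
          rw [Finset.sum_mul]
          apply Finset.sum_le_sum
          intro z _
          rw [abs_mul, abs_mul, abs_of_nonneg (hJnn y z)]
          have hyz : |σ y| * |σ z| ≤ W1 := by
            nlinarith [hsq y, hsq z, sq_abs (σ y), sq_abs (σ z), sq_nonneg (|σ y| - |σ z|),
              abs_nonneg (σ y), abs_nonneg (σ z)]
          calc  J y z * |σ y| * |σ z| = J y z * (|σ y| * |σ z|) := by ring
            _ ≤ J y z * W1 := mul_le_mul_of_nonneg_left hyz (hJnn y z)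
  have h2 : |∑ y, K y * σ y| ≤ (∑ y, K y) * (1 + W1) := by
    rw [Finset.sum_mul]
    calc |∑ y, K y * σ y| ≤ ∑ y, |K y * σ y| := Finset.abs_sum_le_sum_abs _ _
      _ ≤ ∑ y, K y * (1 + W1) := by
          apply Finset.sum_le_sum
          intro y _
          rw [abs_mul, abs_of_nonneg (hK y)]
          have : |σ y| ≤ 1 + W1 := (abs_le_one_add_sq (σ y)).trans (by linarith [hsq y])
          exact mul_le_mul_of_nonneg_left this (hK y)
  have hJs : 0 ≤ ∑ y, ∑ z, J y z :=
    Finset.sum_nonneg fun y _ => Finset.sum_nonneg fun z _ => hJnn y z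
  have hKs : 0 ≤ ∑ y, K y := Finset.sum_nonneg fun y _ => hK y
  calc |c0 * ∑ y, ∑ z, J y z * σ y * σ z + c1 * ∑ y, K y * σ y|
      ≤ |c0 * ∑ y, ∑ z, J y z * σ y * σ z| + |c1 * ∑ y, K y * σ y| := abs_add_le _ _
    _ = c0 * |∑ y, ∑ z, J y z * σ y * σ z| + c1 * |∑ y, K y * σ y| := by
        rw [abs_mul, abs_mul, abs_of_nonneg hc0, abs_of_nonneg hc1]
    _ ≤ c0 * ((∑ y, ∑ z, J y z) * W1) + c1 * ((∑ y, K y) * (1 + W1)) := by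
        have := mul_le_mul_of_nonneg_left h1 hc0
        have := mul_le_mul_of_nonneg_left h2 hc1
        linarith
    _ ≤ _ := by nlinarith

lemma ham_integrables (μ : Measure ℝ) [IsFiniteMeasure μ]
    (hexp : ∀ θ : ℝ, 0 < θ → Integrable (fun t => Real.exp (θ * t ^ 2)) μ)
    (G : (V → ℝ) → ℝ) (hGc : Continuous G) (C : ℝ)
    (hG : ∀ σ : V → ℝ, |G σ| ≤ C * (1 + ∑ y, (σ y) ^ 2)) (x : V) :
    Integrable (fun σ : V → ℝ => Real.exp (G σ)) (Measure.pi fun _ : V => μ)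
    ∧ Integrable (fun σ : V → ℝ => σ x * Real.exp (G σ)) (Measure.pi fun _ : V => μ) := by
  have hC : 0 ≤ C := by
    have h := hG (fun _ => 0)
    simp only [ne_eq, OfNat.ofNat_ne_zero, not_false_eq_true, zero_pow, Finset.sum_const,
      smul_zero, add_zero, mul_one] at h
    exact (abs_nonneg _).trans h
  set θ := C + 1 with hθdef
  have hθ : 0 < θ := by positivity
  set Dm : (V → ℝ) → ℝ := fun σ => Real.exp C * ∏ y, Real.exp (θ * (σ y) ^ 2) with hDm
  have hDmint : Integrable Dm (Measure.pi fun _ : V => μ) :=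
    (integrable_pi_prod μ (fun _ t => Real.exp (θ * t ^ 2)) (fun y => hexp θ hθ)).const_mul _
  have kb : ∀ σ : V → ℝ, |σ x * Real.exp (G σ)| ≤ Dm σ ∧ Real.exp (G σ) ≤ Dm σ := by
    intro σ
    set W1 := ∑ y, (σ y) ^ 2 with hW1
    have hWnn : 0 ≤ W1 := Finset.sum_nonneg fun y _ => sq_nonneg _
    have hsq : (σ x) ^ 2 ≤ W1 :=
      Finset.single_le_sum (f := fun y => (σ y) ^ 2) (fun y _ => sq_nonneg _) (Finset.mem_univ x)
    have hexpW : Real.exp (C + θ * W1) = Dm σ := by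
      rw [hDm, Real.exp_add]
      congr 1
      rw [show θ * W1 = ∑ y, θ * (σ y) ^ 2 by rw [hW1, Finset.mul_sum], Real.exp_sum]
    have hGle : G σ ≤ C + θ * W1 := by
      have := (abs_le.mp (hG σ)).2
      nlinarith
    have h2 : Real.exp (G σ) ≤ Dm σ := by
      rw [← hexpW]
      exact Real.exp_le_exp.mpr hGle
    constructor
    · rw [abs_mul, Real.abs_exp]
      have hx : |σ x| ≤ Real.exp W1 := by
        have h1 : |σ x| ≤ 1 + (σ x) ^ 2 := abs_le_one_add_sq _
        have h3 : W1 + 1 ≤ Real.exp W1 := Real.add_one_le_exp _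
        linarith
      have hG2 : Real.exp (G σ) ≤ Real.exp (C + C * W1) := by
        apply Real.exp_le_exp.mpr
        have := (abs_le.mp (hG σ)).2
        nlinarith
      calc |σ x| * Real.exp (G σ) ≤ Real.exp W1 * Real.exp (C + C * W1) :=
            mul_le_mul hx hG2 (Real.exp_nonneg _) (Real.exp_nonneg _)
        _ = Real.exp (C + θ * W1) := by rw [← Real.exp_add]; congr 1; rw [hθdef]; ring
        _ = Dm σ := hexpW
    · exact h2
  constructor
  · apply Integrable.mono' hDmint (Continuous.aestronglyMeasurable (Real.continuous_exp.comp hGc))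
    exact Filter.Eventually.of_forall fun σ => by
      show ‖Real.exp (G σ)‖ ≤ Dm σ
      rw [Real.norm_eq_abs, Real.abs_exp]; exact (kb σ).2
  · apply Integrable.mono' hDmint
      (Continuous.aestronglyMeasurable ((continuous_apply x).mul (Real.continuous_exp.comp hGc)))
    exact Filter.Eventually.of_forall fun σ => by
      show ‖σ x * Real.exp (G σ)‖ ≤ Dm σ
      rw [Real.norm_eq_abs]; exact (kb σ).1

lemma denom_pos (μ : Measure ℝ) [IsFiniteMeasure μ] (hμ : μ ≠ 0)
    (G : (V → ℝ) → ℝ) (hint : Integrable (fun σ : V → ℝ => Real.exp (G σ))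
      (Measure.pi fun _ : V => μ)) :
    0 < ∫ σ : V → ℝ, Real.exp (G σ) ∂(Measure.pi fun _ : V => μ) := by
  rw [integral_pos_iff_support_of_nonneg (fun σ => (Real.exp_pos _).le) hint]
  have hsupp : Function.support (fun σ : V → ℝ => Real.exp (G σ)) = Set.univ :=
    Set.eq_univ_of_forall fun σ => (Real.exp_pos _).ne'
  rw [hsupp]
  rw [pos_iff_ne_zero]
  rw [show ((Measure.pi fun _ : V => μ) Set.univ) = ∏ _y : V, μ Set.univ by
    rw [Measure.pi_univ]]
  rw [Finset.prod_ne_zero_iff]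
  intro y _
  exact fun h => hμ (Measure.measure_univ_eq_zero.mp h)

end Engine5
end WellsAux

open WellsAux

/-- Finite-volume Wells inequality. -/
theorem wells_inequality
    {V : Type*} [Fintype V] [Nonempty V]
    (J : V → V → ℝ) (hJsym : ∀ y z, J y z = J z y)
    (hJnn : ∀ y z, 0 ≤ J y z) (hJdiag : ∀ y, J y y = 0)
    (K : V → ℝ) (hK : ∀ y, 0 ≤ K y)
    (χ : Measure ℝ) [IsFiniteMeasure χ] (hχne : χ ≠ 0)
    (hχsym : χ.map (fun t => -t) = χ)
    (hχexp : ∀ ϑ : ℝ, 0 < ϑ → Integrable (fun t => Real.exp (ϑ * t ^ 2)) χ)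
    (a : ℝ) (ha : 0 < a)
    (hWells : χ (Set.Icc 0 a) ≤ χ (Set.Ici (a * Real.sqrt 2)))
    (x : V) :
    a * ((∫ τ : V → ℝ, τ x *
            Real.exp (a ^ 2 / 2 * ∑ y, ∑ z, J y z * τ y * τ z + a * ∑ y, K y * τ y)
            ∂(Measure.pi fun _ : V =>
              ((2 : ℝ≥0∞)⁻¹ • (Measure.dirac (-1 : ℝ) + Measure.dirac (1 : ℝ))))) /
          (∫ τ : V → ℝ,
            Real.exp (a ^ 2 / 2 * ∑ y, ∑ z, J y z * τ y * τ z + a * ∑ y, K y * τ y)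
            ∂(Measure.pi fun _ : V =>
              ((2 : ℝ≥0∞)⁻¹ • (Measure.dirac (-1 : ℝ) + Measure.dirac (1 : ℝ))))))
      ≤
      (∫ σ : V → ℝ, σ x *
          Real.exp ((1 / 2) * ∑ y, ∑ z, J y z * σ y * σ z + ∑ y, K y * σ y)
          ∂(Measure.pi fun _ : V => χ)) /
        (∫ σ : V → ℝ,
          Real.exp ((1 / 2) * ∑ y, ∑ z, J y z * σ y * σ z + ∑ y, K y * σ y)
          ∂(Measure.pi fun _ : V => χ)) := by
  classical
  have hnu : ((2 : ℝ≥0∞)⁻¹ • (Measure.dirac (-1 : ℝ) + Measure.dirac (1 : ℝ))) = nu := rfl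
  rw [hnu]
  -- the four basic quantities
  set NI := ∫ τ : V → ℝ, τ x *
      Real.exp (a ^ 2 / 2 * ∑ y, ∑ z, J y z * τ y * τ z + a * ∑ y, K y * τ y)
      ∂(Measure.pi fun _ : V => nu) with hNI
  set DI := ∫ τ : V → ℝ,
      Real.exp (a ^ 2 / 2 * ∑ y, ∑ z, J y z * τ y * τ z + a * ∑ y, K y * τ y)
      ∂(Measure.pi fun _ : V => nu) with hDI
  set Nχ := ∫ σ : V → ℝ, σ x *
      Real.exp ((1 / 2) * ∑ y, ∑ z, J y z * σ y * σ z + ∑ y, K y * σ y)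
      ∂(Measure.pi fun _ : V => χ) with hNχ
  set Dχ := ∫ σ : V → ℝ,
      Real.exp ((1 / 2) * ∑ y, ∑ z, J y z * σ y * σ z + ∑ y, K y * σ y)
      ∂(Measure.pi fun _ : V => χ) with hDχ
  -- integrability of all four integrands
  have hνexp : ∀ θ : ℝ, 0 < θ → Integrable (fun t => Real.exp (θ * t ^ 2)) nu :=
    fun θ _ => integrable_nu (by fun_prop)
  have hcont1 : Continuous (fun σ : V → ℝ =>
      (1 / 2) * ∑ y, ∑ z, J y z * σ y * σ z + ∑ y, K y * σ y) := by
    apply Continuous.add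
    · apply Continuous.mul continuous_const
      apply continuous_finset_sum
      intro y _
      apply continuous_finset_sum
      intro z _
      exact (continuous_const.mul (continuous_apply y)).mul (continuous_apply z)
    · apply continuous_finset_sum
      intro y _
      exact continuous_const.mul (continuous_apply y)
  have hcont2 : Continuous (fun τ : V → ℝ =>
      a ^ 2 / 2 * ∑ y, ∑ z, J y z * τ y * τ z + a * ∑ y, K y * τ y) := by
    apply Continuous.add
    · apply Continuous.mul continuous_const
      apply continuous_finset_sum
      intro y _
      apply continuous_finset_sum
      intro z _
      exact (continuous_const.mul (continuous_apply y)).mul (continuous_apply z)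
    · apply Continuous.mul continuous_const
      apply continuous_finset_sum
      intro y _
      exact continuous_const.mul (continuous_apply y)
  have hb1 : ∀ σ : V → ℝ, |(1 / 2) * ∑ y, ∑ z, J y z * σ y * σ z + ∑ y, K y * σ y|
      ≤ ((1 / 2) * (∑ y, ∑ z, J y z) + 1 * ∑ y, K y) * (1 + ∑ y, (σ y) ^ 2) := by
    intro σ
    have := ham_abs_le J K hJnn hK (c0 := 1 / 2) (c1 := 1) (by norm_num) (by norm_num) σ
    simpa using this
  have hb2 : ∀ τ : V → ℝ, |a ^ 2 / 2 * ∑ y, ∑ z, J y z * τ y * τ z + a * ∑ y, K y * τ y|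
      ≤ (a ^ 2 / 2 * (∑ y, ∑ z, J y z) + a * ∑ y, K y) * (1 + ∑ y, (τ y) ^ 2) :=
    fun τ => ham_abs_le J K hJnn hK (by positivity) ha.le τ
  obtain ⟨ID1, IN1⟩ := ham_integrables χ hχexp
    (fun σ : V → ℝ => (1 / 2) * ∑ y, ∑ z, J y z * σ y * σ z + ∑ y, K y * σ y)
    hcont1 _ hb1 x
  obtain ⟨ID2, IN2⟩ := ham_integrables nu hνexp
    (fun τ : V → ℝ => a ^ 2 / 2 * ∑ y, ∑ z, J y z * τ y * τ z + a * ∑ y, K y * τ y)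
    hcont2 _ hb2 x
  -- positivity of the two denominators
  have hDχpos : 0 < Dχ := denom_pos χ hχne _ ID1
  have hDIpos : 0 < DI := denom_pos nu (IsProbabilityMeasure.ne_zero nu) _ ID2
  -- the key positivity from the Griffiths-type expansion
  have hT := integral_uu_exp_nonneg J K a χ hχsym hχexp ha hWells hJnn hK x
  -- rewrite the combined integral as a combination of the four quantities
  have hpt : (fun p : (V → ℝ) × (V → ℝ) => uu a x p * Real.exp (Qf J K a p))
      = fun p : (V → ℝ) × (V → ℝ) =>
        (p.1 x * Real.exp ((1 / 2) * ∑ y, ∑ z, J y z * p.1 y * p.1 z + ∑ y, K y * p.1 y))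
          * Real.exp (a ^ 2 / 2 * ∑ y, ∑ z, J y z * p.2 y * p.2 z + a * ∑ y, K y * p.2 y)
        - Real.exp ((1 / 2) * ∑ y, ∑ z, J y z * p.1 y * p.1 z + ∑ y, K y * p.1 y)
          * (a * (p.2 x * Real.exp (a ^ 2 / 2 * ∑ y, ∑ z, J y z * p.2 y * p.2 z
              + a * ∑ y, K y * p.2 y))) := by
    funext p
    rw [Qf_eq, Real.exp_add]
    unfold WellsAux.uu
    ring
  rw [hpt] at hT
  rw [integral_sub
    (Integrable.mul_prod
      (f := fun σ : V → ℝ => σ x *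
        Real.exp ((1 / 2) * ∑ y, ∑ z, J y z * σ y * σ z + ∑ y, K y * σ y))
      (g := fun τ : V → ℝ =>
        Real.exp (a ^ 2 / 2 * ∑ y, ∑ z, J y z * τ y * τ z + a * ∑ y, K y * τ y))
      IN1 ID2)
    (Integrable.mul_prod
      (f := fun σ : V → ℝ =>
        Real.exp ((1 / 2) * ∑ y, ∑ z, J y z * σ y * σ z + ∑ y, K y * σ y))
      (g := fun τ : V → ℝ => a * (τ x *
        Real.exp (a ^ 2 / 2 * ∑ y, ∑ z, J y z * τ y * τ z + a * ∑ y, K y * τ y)))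
      ID1 (IN2.const_mul a))] at hT
  rw [MeasureTheory.integral_prod_mul
    (f := fun σ : V → ℝ => σ x *
      Real.exp ((1 / 2) * ∑ y, ∑ z, J y z * σ y * σ z + ∑ y, K y * σ y))
    (g := fun τ : V → ℝ =>
      Real.exp (a ^ 2 / 2 * ∑ y, ∑ z, J y z * τ y * τ z + a * ∑ y, K y * τ y)),
    MeasureTheory.integral_prod_mul
    (f := fun σ : V → ℝ =>
      Real.exp ((1 / 2) * ∑ y, ∑ z, J y z * σ y * σ z + ∑ y, K y * σ y))
    (g := fun τ : V → ℝ => a * (τ x *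
      Real.exp (a ^ 2 / 2 * ∑ y, ∑ z, J y z * τ y * τ z + a * ∑ y, K y * τ y)))] at hT
  rw [MeasureTheory.integral_const_mul] at hT
  rw [← hNI, ← hDI, ← hNχ, ← hDχ] at hT
  -- conclude
  rw [← mul_div_assoc, div_le_div_iff₀ hDIpos hDχpos]
  nlinarith [hT]
end

section
/- Core positivity step in the proof of the Wells inequality. Let V be a nonempty finite set, let J : V × V → ℝ be symmetric with J(y,z) ≥ 0 and J(y,y) = 0 for all y,z ∈ V, and let K : V → ℝ satisfy K(y) ≥ 0 for all y ∈ V. Let χ be a finite symmetric Borel measure on ℝ such that ∫ exp(ϑ t²) χ(dt) < ∞ for every ϑ > 0, and let a > 0 satisfy the Wells condition χ([a√2, ∞)) ≥ χ([0, a]). Then for every x ∈ V, ∫_{ℝ^V} ∫_{ℝ^V} (σ_x − a τ_x) · exp( (1/2) Σ_{y,z ∈ V} J(y,z)(σ_y σ_z + a² τ_y τ_z) + Σ_{y ∈ V} K(y)(σ_y + a τ_y) ) μ_I^{⊗V}(dτ) χ^{⊗V}(dσ) ≥ 0. -/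
open MeasureTheory
open scoped ENNReal

noncomputable section WellsAux

/-- The Ising single-site measure. -/
def muI : Measure ℝ := (2 : ℝ≥0∞)⁻¹ • (Measure.dirac (-1 : ℝ) + Measure.dirac (1 : ℝ))

lemma integrable_dirac_of_measurable {f : ℝ → ℝ} (hf : Measurable f) (c : ℝ) :
    Integrable f (Measure.dirac c) := by
  refine ⟨hf.aestronglyMeasurable, ?_⟩
  unfold HasFiniteIntegral
  rw [lintegral_dirac' _ hf.enorm]
  exact enorm_lt_top

lemma muI_integrable {f : ℝ → ℝ} (hf : Measurable f) : Integrable f muI := by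
  unfold muI
  refine Integrable.smul_measure ?_ (by simp)
  rw [integrable_add_measure]
  exact ⟨integrable_dirac_of_measurable hf _, integrable_dirac_of_measurable hf _⟩

lemma muI_integral {f : ℝ → ℝ} (hf : Measurable f) :
    ∫ t, f t ∂muI = (f (-1) + f 1) / 2 := by
  unfold muI
  rw [integral_smul_measure, integral_add_measure (integrable_dirac_of_measurable hf _)
    (integrable_dirac_of_measurable hf _), integral_dirac, integral_dirac]
  simp [ENNReal.toReal_inv]
  ring

instance : IsProbabilityMeasure muI := by
  constructor
  unfold muI
  simp [Measure.add_apply, ENNReal.inv_mul_cancel, two_ne_zero]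
  exact ENNReal.inv_two_add_inv_two


variable {χ : Measure ℝ} [IsFiniteMeasure χ] {a : ℝ}

/-- integrability of (1+|s|)^k against χ -/
lemma chi_int_pow (hχexp : ∀ ϑ : ℝ, 0 < ϑ → Integrable (fun t => Real.exp (ϑ * t ^ 2)) χ)
    (k : ℕ) : Integrable (fun s : ℝ => (1 + |s|) ^ k) χ := by
  have h1 : Integrable (fun s : ℝ => Real.exp ((k:ℝ)^2/2) * Real.exp (1 * s ^ 2)) χ :=
    (hχexp 1 one_pos).const_mul _
  refine h1.mono ?_ ?_
  · exact ((continuous_const.add continuous_abs).pow k).aestronglyMeasurable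
  · refine Filter.Eventually.of_forall fun s => ?_
    have h0 : (0:ℝ) ≤ 1 + |s| := by positivity
    rw [Real.norm_eq_abs, Real.norm_eq_abs, abs_of_nonneg (pow_nonneg h0 k)]
    have h2 : (1 + |s|) ^ k ≤ Real.exp (k * |s|) := by
      calc (1 + |s|) ^ k ≤ (Real.exp |s|) ^ k := by
            apply pow_le_pow_left₀ h0
            rw [add_comm]
            exact Real.add_one_le_exp _
        _ = Real.exp (k * |s|) := by rw [← Real.exp_nat_mul]
    have h3 : (k : ℝ) * |s| ≤ (k:ℝ)^2/2 + s^2 := by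
      nlinarith [sq_nonneg ((k:ℝ) - |s|), sq_abs s, sq_nonneg (|s|)]
    calc (1 + |s|) ^ k ≤ Real.exp (k * |s|) := h2
      _ ≤ Real.exp ((k:ℝ)^2/2 + s^2) := Real.exp_le_exp.2 h3
      _ = |Real.exp ((k:ℝ)^2/2) * Real.exp (1 * s^2)| := by
          rw [← Real.exp_add, abs_of_pos (Real.exp_pos _), one_mul]

/-- integrability of dominated measurable functions against χ -/
lemma chi_int_of_le (hχexp : ∀ ϑ : ℝ, 0 < ϑ → Integrable (fun t => Real.exp (ϑ * t ^ 2)) χ)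
    {f : ℝ → ℝ} (hf : Measurable f) {C : ℝ} {k : ℕ}
    (hb : ∀ s, |f s| ≤ C * (1 + |s|) ^ k) : Integrable f χ := by
  refine ((chi_int_pow hχexp k).const_mul C).mono hf.aestronglyMeasurable
    (Filter.Eventually.of_forall fun s => ?_)
  have h0 : (0:ℝ) ≤ 1 + |s| := by positivity
  rw [Real.norm_eq_abs, Real.norm_eq_abs]
  calc |f s| ≤ C * (1 + |s|) ^ k := hb s
    _ ≤ |C * (1 + |s|) ^ k| := le_abs_self _

lemma chi_sym_integral (hχsym : χ.map (fun t => -t) = χ) {f : ℝ → ℝ} (hf : Measurable f) :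
    ∫ t, f t ∂χ = ∫ t, f (-t) ∂χ := by
  conv_lhs => rw [← hχsym]
  rw [integral_map measurable_neg.aemeasurable hf.aestronglyMeasurable]

/-- the basic moment-type integral -/
def W (χ : Measure ℝ) (a : ℝ) (m n : ℕ) : ℝ := ∫ t, (t + a) ^ m * (t - a) ^ n ∂χ

lemma poly_meas (m n : ℕ) : Measurable fun t : ℝ => (t + a) ^ m * (t - a) ^ n := by
  fun_prop

lemma poly_bound (ha : 0 < a) (m n : ℕ) (t : ℝ) :
    |(t + a) ^ m * (t - a) ^ n| ≤ (1 + a) ^ (m + n) * (1 + |t|) ^ (m + n) := by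
  have h1 : |t + a| ≤ (1 + a) * (1 + |t|) := by
    have := abs_add_le t a
    rw [abs_of_pos ha] at this
    nlinarith [abs_nonneg t]
  have h2 : |t - a| ≤ (1 + a) * (1 + |t|) := by
    have h := abs_sub t a
    rw [abs_of_pos ha] at h
    nlinarith [abs_nonneg t]
  calc |(t + a) ^ m * (t - a) ^ n| = |t + a| ^ m * |t - a| ^ n := by
        rw [abs_mul, abs_pow, abs_pow]
    _ ≤ ((1 + a) * (1 + |t|)) ^ m * ((1 + a) * (1 + |t|)) ^ n := by
        apply mul_le_mul (pow_le_pow_left₀ (abs_nonneg _) h1 m)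
          (pow_le_pow_left₀ (abs_nonneg _) h2 n) (pow_nonneg (abs_nonneg _) n)
          (pow_nonneg (by positivity) m)
    _ = (1 + a) ^ (m + n) * (1 + |t|) ^ (m + n) := by
        rw [← pow_add, mul_pow]

lemma chi_int_poly (hχexp : ∀ ϑ : ℝ, 0 < ϑ → Integrable (fun t => Real.exp (ϑ * t ^ 2)) χ)
    (ha : 0 < a) (m n : ℕ) : Integrable (fun t => (t + a) ^ m * (t - a) ^ n) χ :=
  chi_int_of_le hχexp (poly_meas m n) (poly_bound ha m n)

lemma W_swap (hχsym : χ.map (fun t => -t) = χ) (m n : ℕ) :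
    W χ a n m = (-1 : ℝ) ^ (m + n) * W χ a m n := by
  unfold W
  rw [chi_sym_integral hχsym (poly_meas n m), ← integral_const_mul]
  congr 1 with t
  have h1 : (-t + a) = -(t - a) := by ring
  have h2 : (-t - a) = -(t + a) := by ring
  rw [h1, h2, neg_pow (t - a) n, neg_pow (t + a) m, pow_add]
  ring


lemma even_pow_nonneg (x : ℝ) (p : ℕ) : 0 ≤ x ^ (2 * p) := by
  rw [pow_mul]; positivity

lemma even_pow_neg (x : ℝ) (p : ℕ) : (-x) ^ (2 * p) = x ^ (2 * p) :=
  Even.neg_pow (even_two_mul p) x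

/-- the symmetrized integrand -/
def gfun (a : ℝ) (n p : ℕ) (t : ℝ) : ℝ :=
  (t ^ 2 - a ^ 2) ^ n * (((t + a) ^ (2 * p) + (t - a) ^ (2 * p)) / 2)

def cconst (a : ℝ) (n p : ℕ) : ℝ :=
  (a ^ 2) ^ n * (((2 * a) ^ (2 * p) + (0:ℝ) ^ (2 * p)) / 2)

lemma sqrt2_gt_one : (1:ℝ) < Real.sqrt 2 := by
  rw [show (1:ℝ) = Real.sqrt 1 by simp]
  exact Real.sqrt_lt_sqrt (by norm_num) (by norm_num)

lemma sqrt2_ge_one : (1:ℝ) ≤ Real.sqrt 2 := by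
  rw [show (1:ℝ) = Real.sqrt 1 by simp]
  exact Real.sqrt_le_sqrt (by norm_num)

lemma gfun_even (a : ℝ) (n p : ℕ) (t : ℝ) : gfun a n p (-t) = gfun a n p t := by
  unfold gfun
  have h1 : (-t + a) = -(t - a) := by ring
  have h2 : (-t - a) = -(t + a) := by ring
  rw [h1, h2, even_pow_neg, even_pow_neg]
  ring

lemma gfun_high (ha : 0 < a) (n p : ℕ) {t : ℝ} (ht : a * Real.sqrt 2 ≤ t) :
    cconst a n p ≤ gfun a n p t := by
  have hb0 : 0 ≤ a * Real.sqrt 2 := by positivity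
  have hba : a ≤ a * Real.sqrt 2 := by
    nlinarith [sqrt2_ge_one, ha.le]
  have ht2 : 2 * a ^ 2 ≤ t ^ 2 := by
    have : (a * Real.sqrt 2) ^ 2 ≤ t ^ 2 := pow_le_pow_left₀ hb0 ht 2
    rw [mul_pow, Real.sq_sqrt (by norm_num : (0:ℝ) ≤ 2)] at this
    linarith
  have hA : (a ^ 2) ^ n ≤ (t ^ 2 - a ^ 2) ^ n :=
    pow_le_pow_left₀ (by positivity) (by linarith) n
  have hB1 : (2 * a) ^ (2 * p) ≤ (t + a) ^ (2 * p) :=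
    pow_le_pow_left₀ (by positivity) (by linarith) _
  have hB2 : (0:ℝ) ^ (2 * p) ≤ (t - a) ^ (2 * p) :=
    pow_le_pow_left₀ (le_refl 0) (by linarith) _
  unfold gfun cconst
  apply mul_le_mul hA (by linarith) (by positivity) (le_trans (by positivity) hA)

lemma gfun_low (ha : 0 < a) (n p : ℕ) {t : ℝ} (ht : t ∈ Set.Icc (-a) a) :
    |gfun a n p t| ≤ cconst a n p := by
  obtain ⟨h1, h2⟩ := ht
  have hB0 : 0 ≤ ((t + a) ^ (2 * p) + (t - a) ^ (2 * p)) / 2 := by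
    have := even_pow_nonneg (t + a) p
    have := even_pow_nonneg (t - a) p
    linarith
  have hAbs : |(t ^ 2 - a ^ 2) ^ n| ≤ (a ^ 2) ^ n := by
    rw [abs_pow]
    apply pow_le_pow_left₀ (abs_nonneg _)
    rw [abs_le]
    constructor <;> nlinarith
  have hB : ((t + a) ^ (2 * p) + (t - a) ^ (2 * p)) / 2
      ≤ ((2 * a) ^ (2 * p) + (0:ℝ) ^ (2 * p)) / 2 := by
    rcases Nat.eq_zero_or_pos p with hp | hp
    · subst hp; norm_num
    · have hne : 2 * p ≠ 0 := by omega
      have hsum : (t + a) ^ (2 * p) + (a - t) ^ (2 * p) ≤ ((t + a) + (a - t)) ^ (2 * p) :=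
        pow_add_pow_le (by linarith) (by linarith) hne
      have hz : (0:ℝ) ^ (2 * p) = 0 := zero_pow hne
      have hth : (t - a) ^ (2 * p) = (a - t) ^ (2 * p) := by
        rw [show t - a = -(a - t) by ring, even_pow_neg]
      rw [hth, hz]
      have : (t + a) + (a - t) = 2 * a := by ring
      rw [this] at hsum
      linarith
  unfold gfun cconst
  rw [abs_mul, abs_of_nonneg hB0]
  apply mul_le_mul hAbs hB hB0 (by positivity)

lemma gfun_mid (ha : 0 < a) (n p : ℕ) {t : ℝ} (ht : t ∉ Set.Icc (-a) a) :
    0 ≤ gfun a n p t := by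
  have h : a ^ 2 ≤ t ^ 2 := by
    simp only [Set.mem_Icc, not_and_or, not_le] at ht
    rcases ht with h | h <;> nlinarith
  unfold gfun
  have := even_pow_nonneg (t + a) p
  have := even_pow_nonneg (t - a) p
  have h1 : (0:ℝ) ≤ (t ^ 2 - a ^ 2) ^ n := by
    apply pow_nonneg; linarith
  positivity


lemma measure_chain (hχsym : χ.map (fun t => -t) = χ) (ha : 0 < a)
    (hWells : χ (Set.Icc 0 a) ≤ χ (Set.Ici (a * Real.sqrt 2))) :
    χ (Set.Icc (-a) a) ≤ χ (Set.Iic (-(a * Real.sqrt 2)) ∪ Set.Ici (a * Real.sqrt 2)) := by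
  set b := a * Real.sqrt 2 with hb
  have hb0 : 0 < b := by positivity
  have hmap : ∀ s : Set ℝ, MeasurableSet s → χ ((fun t : ℝ => -t) ⁻¹' s) = χ s := by
    intro s hs
    conv_rhs => rw [← hχsym]
    rw [Measure.map_apply measurable_neg hs]
  have h1 : χ (Set.Ico (-a) 0) = χ (Set.Ioc 0 a) := by
    have : (fun t : ℝ => -t) ⁻¹' Set.Ico (-a) 0 = Set.Ioc 0 a := by
      ext t
      simp only [Set.mem_preimage, Set.mem_Ico, Set.mem_Ioc]
      constructor <;> intro h <;> constructor <;> linarith [h.1, h.2]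
    rw [← this, hmap _ measurableSet_Ico]
  have h2 : χ (Set.Iic (-b)) = χ (Set.Ici b) := by
    have : (fun t : ℝ => -t) ⁻¹' Set.Iic (-b) = Set.Ici b := by
      ext t
      simp only [Set.mem_preimage, Set.mem_Iic, Set.mem_Ici]
      constructor <;> intro h <;> linarith
    rw [← this, hmap _ measurableSet_Iic]
  have hsub : Set.Icc (-a) a ⊆ Set.Ico (-a) 0 ∪ Set.Icc 0 a := by
    intro t ht
    rcases lt_or_ge t 0 with h | h
    · exact Or.inl ⟨ht.1, h⟩
    · exact Or.inr ⟨h, ht.2⟩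
  have hdisj : Disjoint (Set.Iic (-b)) (Set.Ici b) := by
    exact Set.Iic_disjoint_Ici.mpr (not_le.mpr (by linarith))
  calc χ (Set.Icc (-a) a) ≤ χ (Set.Ico (-a) 0 ∪ Set.Icc 0 a) := measure_mono hsub
    _ ≤ χ (Set.Ico (-a) 0) + χ (Set.Icc 0 a) := measure_union_le _ _
    _ = χ (Set.Ioc 0 a) + χ (Set.Icc 0 a) := by rw [h1]
    _ ≤ χ (Set.Icc 0 a) + χ (Set.Icc 0 a) :=
        add_le_add (measure_mono Set.Ioc_subset_Icc_self) le_rfl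
    _ ≤ χ (Set.Ici b) + χ (Set.Ici b) := add_le_add hWells hWells
    _ = χ (Set.Iic (-b)) + χ (Set.Ici b) := by rw [h2]
    _ = χ (Set.Iic (-b) ∪ Set.Ici b) := (measure_union (μ := χ) hdisj measurableSet_Ici).symm

lemma gfun_integrable (hχexp : ∀ ϑ : ℝ, 0 < ϑ → Integrable (fun t => Real.exp (ϑ * t ^ 2)) χ)
    (ha : 0 < a) (n p : ℕ) : Integrable (gfun a n p) χ := by
  have h := ((chi_int_poly hχexp ha (n + 2 * p) n).add
    (chi_int_poly hχexp ha n (n + 2 * p))).div_const 2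
  apply h.congr
  refine Filter.Eventually.of_forall fun t => ?_
  show ((t + a) ^ (n + 2 * p) * (t - a) ^ n + (t + a) ^ n * (t - a) ^ (n + 2 * p)) / 2
      = gfun a n p t
  unfold gfun
  have key : (t + a) ^ n * (t - a) ^ n = (t ^ 2 - a ^ 2) ^ n := by
    rw [← mul_pow]; ring_nf
  rw [pow_add, pow_add]
  linear_combination (((t + a) ^ (2 * p) + (t - a) ^ (2 * p)) / 2) * key

lemma gfun_integral_eq (hχsym : χ.map (fun t => -t) = χ)
    (hχexp : ∀ ϑ : ℝ, 0 < ϑ → Integrable (fun t => Real.exp (ϑ * t ^ 2)) χ)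
    (ha : 0 < a) (n p : ℕ) :
    ∫ t, gfun a n p t ∂χ = W χ a (n + 2 * p) n := by
  have hsw : W χ a n (n + 2 * p) = W χ a (n + 2 * p) n := by
    rw [W_swap hχsym]
    have : Even ((n + 2 * p) + n) := ⟨n + p, by ring⟩
    rw [Even.neg_one_pow this, one_mul]
  have heq : ∀ t : ℝ, gfun a n p t
      = ((t + a) ^ (n + 2 * p) * (t - a) ^ n + (t + a) ^ n * (t - a) ^ (n + 2 * p)) / 2 := by
    intro t
    unfold gfun
    have key : (t + a) ^ n * (t - a) ^ n = (t ^ 2 - a ^ 2) ^ n := by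
      rw [← mul_pow]; ring_nf
    rw [pow_add, pow_add]
    linear_combination (-(((t + a) ^ (2 * p) + (t - a) ^ (2 * p)) / 2)) * key
  rw [integral_congr_ae (Filter.Eventually.of_forall heq)]
  rw [show (fun t : ℝ => ((t + a) ^ (n + 2 * p) * (t - a) ^ n
      + (t + a) ^ n * (t - a) ^ (n + 2 * p)) / 2)
    = fun t : ℝ => ((fun t : ℝ => (t + a) ^ (n + 2 * p) * (t - a) ^ n) t
      + (fun t : ℝ => (t + a) ^ n * (t - a) ^ (n + 2 * p)) t) / 2 from rfl]
  rw [integral_div, integral_add (chi_int_poly hχexp ha _ _) (chi_int_poly hχexp ha _ _)]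
  show (W χ a (n + 2 * p) n + W χ a n (n + 2 * p)) / 2 = _
  rw [hsw]; ring

lemma W_key (hχsym : χ.map (fun t => -t) = χ)
    (hχexp : ∀ ϑ : ℝ, 0 < ϑ → Integrable (fun t => Real.exp (ϑ * t ^ 2)) χ)
    (ha : 0 < a) (hWells : χ (Set.Icc 0 a) ≤ χ (Set.Ici (a * Real.sqrt 2)))
    (n p : ℕ) : 0 ≤ W χ a (n + 2 * p) n := by
  rw [← gfun_integral_eq hχsym hχexp ha n p]
  set b := a * Real.sqrt 2 with hb
  have hb0 : 0 < b := by positivity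
  have hba : a < b := by nlinarith [sqrt2_gt_one, ha]
  set S : Set ℝ := Set.Iic (-b) ∪ Set.Ici b with hS
  set T : Set ℝ := Set.Icc (-a) a with hT
  have hSmeas : MeasurableSet S := (measurableSet_Iic).union measurableSet_Ici
  have hTmeas : MeasurableSet T := measurableSet_Icc
  have hc0 : 0 ≤ cconst a n p := by
    unfold cconst
    have := even_pow_nonneg (2 * a) p
    have := even_pow_nonneg (0:ℝ) p
    positivity
  have hpt : ∀ t, S.indicator (fun _ => cconst a n p) t
      ≤ gfun a n p t + T.indicator (fun _ => cconst a n p) t := by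
    intro t
    by_cases hTt : t ∈ T
    · have hSt : t ∉ S := by
        simp only [hS, Set.mem_union, Set.mem_Iic, Set.mem_Ici] at *
        obtain ⟨h1, h2⟩ := hTt
        push_neg
        constructor <;> linarith
      rw [Set.indicator_of_notMem hSt, Set.indicator_of_mem hTt]
      have := gfun_low ha n p hTt
      have := abs_le.mp this
      linarith [this.1]
    · rw [Set.indicator_of_notMem hTt]
      by_cases hSt : t ∈ S
      · rw [Set.indicator_of_mem hSt]
        have : cconst a n p ≤ gfun a n p t := by
          rcases hSt with h | h
          · rw [← gfun_even]
            exact gfun_high ha n p (by simp only [Set.mem_Iic] at h; linarith)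
          · exact gfun_high ha n p h
        linarith
      · rw [Set.indicator_of_notMem hSt]
        linarith [gfun_mid ha n p hTt]
  have hint1 : Integrable (S.indicator fun _ : ℝ => cconst a n p) χ :=
    (integrable_const _).indicator hSmeas
  have hint2 : Integrable (fun t => gfun a n p t + T.indicator (fun _ => cconst a n p) t) χ :=
    (gfun_integrable hχexp ha n p).add ((integrable_const _).indicator hTmeas)
  have hmono := integral_mono hint1 hint2 hpt
  rw [integral_add (gfun_integrable hχexp ha n p)
    ((integrable_const _).indicator hTmeas)] at hmono
  rw [integral_indicator_const _ hSmeas, integral_indicator_const _ hTmeas] at hmono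
  have hmeas_le : (χ T).toReal ≤ (χ S).toReal := by
    apply ENNReal.toReal_mono (measure_ne_top χ S)
    exact measure_chain hχsym ha hWells
  have : (χ T).toReal * cconst a n p ≤ (χ S).toReal * cconst a n p :=
    mul_le_mul_of_nonneg_right hmeas_le hc0
  simp only [smul_eq_mul, measureReal_def] at hmono
  linarith

lemma onesite (hχsym : χ.map (fun t => -t) = χ)
    (hχexp : ∀ ϑ : ℝ, 0 < ϑ → Integrable (fun t => Real.exp (ϑ * t ^ 2)) χ)
    (ha : 0 < a) (hWells : χ (Set.Icc 0 a) ≤ χ (Set.Ici (a * Real.sqrt 2)))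
    (m n : ℕ) : 0 ≤ W χ a m n + W χ a n m := by
  rcases Nat.even_or_odd (m + n) with he | ho
  · have hWnn : ∀ m' n' : ℕ, n' ≤ m' → Even (m' + n') → 0 ≤ W χ a m' n' := by
      intro m' n' hle hev
      obtain ⟨k, hk⟩ := hev
      have hev2 : Even (m' - n') := ⟨k - n', by omega⟩
      obtain ⟨p, hp⟩ := hev2
      have hm' : m' = n' + 2 * p := by omega
      rw [hm']
      exact W_key hχsym hχexp ha hWells n' p
    have hswap : W χ a n m = W χ a m n := by
      rw [W_swap hχsym, Even.neg_one_pow he, one_mul]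
    rcases le_total n m with h | h
    · have := hWnn m n h he
      linarith [hswap]
    · have := hWnn n m h (by rwa [Nat.add_comm] at he)
      rw [hswap] at this ⊢
      linarith
  · have : W χ a n m = -W χ a m n := by
      rw [W_swap hχsym, Odd.neg_one_pow ho, neg_one_mul]
    linarith
section Multi

lemma integral_pi_prod {ι : Type*} [Fintype ι] (m : Measure ℝ) [SigmaFinite m] (f : ι → ℝ → ℝ) :
    ∫ x : ι → ℝ, ∏ i, f i (x i) ∂Measure.pi (fun _ => m) = ∏ i, ∫ t, f i t ∂m := by
  letI : MeasureSpace ℝ := ⟨m⟩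
  exact integral_fintype_prod_eq_prod f

lemma integrable_pi_prod {ι : Type*} [Fintype ι] (m : Measure ℝ) [SigmaFinite m] (f : ι → ℝ → ℝ)
    (hf : ∀ i, Integrable (f i) m) :
    Integrable (fun x : ι → ℝ => ∏ i, f i (x i)) (Measure.pi fun _ => m) := by
  letI : MeasureSpace ℝ := ⟨m⟩
  exact Integrable.fintype_prod hf

variable {V : Type*} [Fintype V]

/-- the per-site change of variables -/
def usite (a : ℝ) (p : (V → ℝ) × (V → ℝ)) : V ⊕ V → ℝ :=
  Sum.elim (fun y => p.1 y + a * p.2 y) (fun y => p.1 y - a * p.2 y)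

def Mono (a : ℝ) (d : (V ⊕ V) →₀ ℕ) (p : (V → ℝ) × (V → ℝ)) : ℝ :=
  ∏ i, usite a p i ^ d i

lemma usite_meas (a : ℝ) (i : V ⊕ V) : Measurable fun p : (V → ℝ) × (V → ℝ) => usite a p i := by
  cases i <;> unfold usite <;> simp only [Sum.elim_inl, Sum.elim_inr] <;> fun_prop

lemma Mono_meas (a : ℝ) (d : (V ⊕ V) →₀ ℕ) : Measurable (Mono a d) := by
  unfold Mono
  exact Finset.measurable_prod _ fun i _ => (usite_meas a i).pow_const _

lemma Mono_factor (a : ℝ) (d : (V ⊕ V) →₀ ℕ) (p : (V → ℝ) × (V → ℝ)) :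
    Mono a d p = ∏ y : V,
      ((p.1 y + a * p.2 y) ^ d (Sum.inl y) * (p.1 y - a * p.2 y) ^ d (Sum.inr y)) := by
  unfold Mono
  rw [Fintype.prod_sum_type, ← Finset.prod_mul_distrib]
  rfl

lemma Mono_mul (a : ℝ) (d e : (V ⊕ V) →₀ ℕ) (p : (V → ℝ) × (V → ℝ)) :
    Mono a e p * Mono a d p = Mono a (e + d) p := by
  unfold Mono
  rw [← Finset.prod_mul_distrib]
  apply Finset.prod_congr rfl
  intro i _
  rw [Finsupp.add_apply, pow_add]

lemma Mono_single (a : ℝ) (j : V ⊕ V) (p : (V → ℝ) × (V → ℝ)) :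
    Mono a (Finsupp.single j 1) p = usite a p j := by
  unfold Mono
  classical
  rw [Finset.prod_eq_single j]
  · simp
  · intro i _ hij
    rw [Finsupp.single_apply, if_neg (fun h => hij h.symm), pow_zero]
  · intro h
    exact absurd (Finset.mem_univ j) h

variable {χ : Measure ℝ} [IsFiniteMeasure χ] {a : ℝ}

lemma onept_bound (ha : 0 < a) (m n : ℕ) (s t : ℝ) :
    |(s + a * t) ^ m * (s - a * t) ^ n|
      ≤ (1 + |s|) ^ (m + n) * (1 + a * |t|) ^ (m + n) := by
  have h0 : (0:ℝ) ≤ 1 + |s| := by positivity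
  have h0' : (0:ℝ) ≤ 1 + a * |t| := by positivity
  have h1 : |s + a * t| ≤ (1 + |s|) * (1 + a * |t|) := by
    calc |s + a * t| ≤ |s| + a * |t| := by
          refine (abs_add_le _ _).trans ?_
          rw [abs_mul, abs_of_pos ha]
      _ ≤ (1 + |s|) * (1 + a * |t|) := by
          nlinarith [abs_nonneg s, abs_nonneg t,
            mul_nonneg (abs_nonneg s) (mul_nonneg ha.le (abs_nonneg t))]
  have h2 : |s - a * t| ≤ (1 + |s|) * (1 + a * |t|) := by
    calc |s - a * t| ≤ |s| + a * |t| := by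
          refine (abs_sub _ _).trans ?_
          rw [abs_mul, abs_of_pos ha]
      _ ≤ (1 + |s|) * (1 + a * |t|) := by
          nlinarith [abs_nonneg s, abs_nonneg t,
            mul_nonneg (abs_nonneg s) (mul_nonneg ha.le (abs_nonneg t))]
  calc |(s + a * t) ^ m * (s - a * t) ^ n| = |s + a * t| ^ m * |s - a * t| ^ n := by
        rw [abs_mul, abs_pow, abs_pow]
    _ ≤ ((1 + |s|) * (1 + a * |t|)) ^ m * ((1 + |s|) * (1 + a * |t|)) ^ n :=
        mul_le_mul (pow_le_pow_left₀ (abs_nonneg _) h1 m)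
          (pow_le_pow_left₀ (abs_nonneg _) h2 n) (pow_nonneg (abs_nonneg _) n)
          (pow_nonneg (by positivity) m)
    _ = (1 + |s|) ^ (m + n) * (1 + a * |t|) ^ (m + n) := by
        rw [← pow_add, mul_pow]

lemma muI_int_pow (ha : 0 < a) (k : ℕ) : Integrable (fun t : ℝ => (1 + a * |t|) ^ k) muI :=
  muI_integrable (by fun_prop)

lemma Mono_integrable (hχexp : ∀ ϑ : ℝ, 0 < ϑ → Integrable (fun t => Real.exp (ϑ * t ^ 2)) χ)
    (ha : 0 < a) (d : (V ⊕ V) →₀ ℕ) :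
    Integrable (Mono a d)
      ((Measure.pi fun _ : V => χ).prod (Measure.pi fun _ : V => muI)) := by
  set k : V → ℕ := fun y => d (Sum.inl y) + d (Sum.inr y) with hk
  have hint1 : Integrable (fun σ : V → ℝ => ∏ y, (1 + |σ y|) ^ k y) (Measure.pi fun _ : V => χ) :=
    integrable_pi_prod χ _ (fun y => chi_int_pow hχexp (k y))
  have hint2 : Integrable (fun τ : V → ℝ => ∏ y, (1 + a * |τ y|) ^ k y)
      (Measure.pi fun _ : V => muI) :=
    integrable_pi_prod muI _ (fun y => muI_int_pow ha (k y))
  refine (hint1.mul_prod hint2).mono (Mono_meas a d).aestronglyMeasurable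
    (Filter.Eventually.of_forall fun p => ?_)
  rw [Real.norm_eq_abs, Real.norm_eq_abs, Mono_factor]
  calc |∏ y : V, ((p.1 y + a * p.2 y) ^ d (Sum.inl y) * (p.1 y - a * p.2 y) ^ d (Sum.inr y))|
      = ∏ y : V, |(p.1 y + a * p.2 y) ^ d (Sum.inl y) * (p.1 y - a * p.2 y) ^ d (Sum.inr y)| := by
        rw [Finset.abs_prod]
    _ ≤ ∏ y : V, ((1 + |p.1 y|) ^ k y * (1 + a * |p.2 y|) ^ k y) := by
        apply Finset.prod_le_prod (fun y _ => abs_nonneg _)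
        intro y _
        exact onept_bound ha _ _ _ _
    _ = (∏ y, (1 + |p.1 y|) ^ k y) * ∏ y, (1 + a * |p.2 y|) ^ k y := Finset.prod_mul_distrib
    _ ≤ |(∏ y, (1 + |p.1 y|) ^ k y) * ∏ y, (1 + a * |p.2 y|) ^ k y| := le_abs_self _

lemma Wsite_eq (hχexp : ∀ ϑ : ℝ, 0 < ϑ → Integrable (fun t => Real.exp (ϑ * t ^ 2)) χ)
    (ha : 0 < a) (m n : ℕ) :
    ∫ s, ∫ t, (s + a * t) ^ m * (s - a * t) ^ n ∂muI ∂χ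
      = (W χ a m n + W χ a n m) / 2 := by
  have hinner : ∀ s : ℝ, ∫ t, (s + a * t) ^ m * (s - a * t) ^ n ∂muI
      = ((s + a) ^ m * (s - a) ^ n + (s - a) ^ m * (s + a) ^ n) / 2 := by
    intro s
    rw [muI_integral (f := fun t => (s + a * t) ^ m * (s - a * t) ^ n) (by fun_prop)]
    norm_num
    ring_nf
  rw [integral_congr_ae (Filter.Eventually.of_forall hinner)]
  unfold W
  rw [show (fun s : ℝ => ((s + a) ^ m * (s - a) ^ n + (s - a) ^ m * (s + a) ^ n) / 2)
      = (fun s : ℝ => ((fun u : ℝ => (u + a) ^ m * (u - a) ^ n) s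
        + (fun u : ℝ => (u + a) ^ n * (u - a) ^ m) s) / 2) from funext fun s => by ring]
  rw [integral_div, integral_add (chi_int_poly hχexp ha _ _) (chi_int_poly hχexp ha _ _)]

lemma Mono_nonneg (hχsym : χ.map (fun t => -t) = χ)
    (hχexp : ∀ ϑ : ℝ, 0 < ϑ → Integrable (fun t => Real.exp (ϑ * t ^ 2)) χ)
    (ha : 0 < a) (hWells : χ (Set.Icc 0 a) ≤ χ (Set.Ici (a * Real.sqrt 2)))
    (d : (V ⊕ V) →₀ ℕ) :
    0 ≤ ∫ p, Mono a d p ∂((Measure.pi fun _ : V => χ).prod (Measure.pi fun _ : V => muI)) := by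
  rw [integral_prod _ (Mono_integrable hχexp ha d)]
  have h1 : ∀ σ : V → ℝ, ∫ τ : V → ℝ, Mono a d (σ, τ) ∂(Measure.pi fun _ : V => muI)
      = ∏ y : V, (fun (y'' : V) (s : ℝ) =>
          ∫ t, (s + a * t) ^ d (Sum.inl y'') * (s - a * t) ^ d (Sum.inr y'') ∂muI) y (σ y) := by
    intro σ
    rw [show (fun τ : V → ℝ => Mono a d (σ, τ))
        = fun τ : V → ℝ => ∏ y : V,
          (fun (y' : V) (t : ℝ) => (σ y' + a * t) ^ d (Sum.inl y') * (σ y' - a * t) ^ d (Sum.inr y')) y (τ y)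
      from funext fun τ => Mono_factor a d (σ, τ)]
    exact integral_pi_prod (ι := V) muI
      (fun y' t => (σ y' + a * t) ^ d (Sum.inl y') * (σ y' - a * t) ^ d (Sum.inr y'))
  rw [integral_congr_ae (Filter.Eventually.of_forall h1)]
  rw [integral_pi_prod χ (fun (y'' : V) (s : ℝ) =>
    ∫ t, (s + a * t) ^ d (Sum.inl y'') * (s - a * t) ^ d (Sum.inr y'') ∂muI)]
  apply Finset.prod_nonneg
  intro y _
  rw [Wsite_eq hχexp ha]
  have := onesite hχsym hχexp ha hWells (d (Sum.inl y)) (d (Sum.inr y))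
  linarith

end Multi
section Poly

variable {V : Type*} [Fintype V]

/-- all coefficients nonnegative -/
def NN (P : MvPolynomial (V ⊕ V) ℝ) : Prop := ∀ d, 0 ≤ P.coeff d

lemma NN_zero : NN (0 : MvPolynomial (V ⊕ V) ℝ) := fun d => by simp

lemma NN_add {P Q : MvPolynomial (V ⊕ V) ℝ} (hP : NN P) (hQ : NN Q) : NN (P + Q) := fun d => by
  rw [MvPolynomial.coeff_add]; exact add_nonneg (hP d) (hQ d)

lemma NN_mul {P Q : MvPolynomial (V ⊕ V) ℝ} (hP : NN P) (hQ : NN Q) : NN (P * Q) := fun d => by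
  classical
  rw [MvPolynomial.coeff_mul]
  exact Finset.sum_nonneg fun x _ => mul_nonneg (hP _) (hQ _)

lemma NN_C {c : ℝ} (hc : 0 ≤ c) : NN (MvPolynomial.C c : MvPolynomial (V ⊕ V) ℝ) := fun d => by
  classical
  rw [MvPolynomial.coeff_C]
  split <;> [exact hc; exact le_refl 0]

lemma NN_X (i : V ⊕ V) : NN (MvPolynomial.X i : MvPolynomial (V ⊕ V) ℝ) := fun d => by
  classical
  rw [MvPolynomial.coeff_X']
  split <;> norm_num

lemma NN_sum {ι : Type*} (s : Finset ι) (f : ι → MvPolynomial (V ⊕ V) ℝ)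
    (h : ∀ i ∈ s, NN (f i)) : NN (∑ i ∈ s, f i) := by
  classical
  induction s using Finset.induction_on with
  | empty => simpa using NN_zero
  | insert _ _ hx ih =>
      rw [Finset.sum_insert hx]
      exact NN_add (h _ (Finset.mem_insert_self _ _))
        (ih fun i hi => h i (Finset.mem_insert_of_mem hi))

lemma NN_pow {P : MvPolynomial (V ⊕ V) ℝ} (hP : NN P) (k : ℕ) : NN (P ^ k) := by
  induction k with
  | zero => simpa [pow_zero] using NN_C (le_of_lt one_pos)
  | succ k ih => rw [pow_succ]; exact NN_mul ih hP

variable {χ : Measure ℝ} [IsFiniteMeasure χ] {a : ℝ}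

lemma eval_Mono (P : MvPolynomial (V ⊕ V) ℝ) (e : (V ⊕ V) →₀ ℕ) :
    (fun p : (V → ℝ) × (V → ℝ) => Mono a e p * MvPolynomial.eval (usite a p) P)
      = fun p => ∑ d ∈ P.support, P.coeff d * Mono a (e + d) p := by
  funext p
  rw [MvPolynomial.eval_eq', Finset.mul_sum]
  apply Finset.sum_congr rfl
  intro d _
  rw [show (∏ i, usite a p i ^ d i) = Mono a d p from rfl, ← Mono_mul]
  ring

lemma poly_integrable (hχexp : ∀ ϑ : ℝ, 0 < ϑ → Integrable (fun t => Real.exp (ϑ * t ^ 2)) χ)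
    (ha : 0 < a) (P : MvPolynomial (V ⊕ V) ℝ) (e : (V ⊕ V) →₀ ℕ) :
    Integrable (fun p => Mono a e p * MvPolynomial.eval (usite a p) P)
      ((Measure.pi fun _ : V => χ).prod (Measure.pi fun _ : V => muI)) := by
  rw [eval_Mono]
  exact integrable_finset_sum _ (fun d _ => (Mono_integrable hχexp ha (e + d)).const_mul _)

lemma poly_nonneg (hχsym : χ.map (fun t => -t) = χ)
    (hχexp : ∀ ϑ : ℝ, 0 < ϑ → Integrable (fun t => Real.exp (ϑ * t ^ 2)) χ)
    (ha : 0 < a) (hWells : χ (Set.Icc 0 a) ≤ χ (Set.Ici (a * Real.sqrt 2)))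
    (P : MvPolynomial (V ⊕ V) ℝ) (hP : NN P) (e : (V ⊕ V) →₀ ℕ) :
    0 ≤ ∫ p, Mono a e p * MvPolynomial.eval (usite a p) P
      ∂((Measure.pi fun _ : V => χ).prod (Measure.pi fun _ : V => muI)) := by
  rw [eval_Mono]
  rw [integral_finset_sum _ (fun d _ => (Mono_integrable hχexp ha (e + d)).const_mul _)]
  apply Finset.sum_nonneg
  intro d _
  rw [MeasureTheory.integral_const_mul]
  exact mul_nonneg (hP d) (Mono_nonneg hχsym hχexp ha hWells (e + d))

end Poly
section QPart

variable {V : Type*} [Fintype V]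

def Qpoly (a : ℝ) (J : V → V → ℝ) (K : V → ℝ) : MvPolynomial (V ⊕ V) ℝ :=
  MvPolynomial.C (1/4 : ℝ) * (∑ y, ∑ z, MvPolynomial.C (J y z) *
    (MvPolynomial.X (Sum.inl y) * MvPolynomial.X (Sum.inl z)
      + MvPolynomial.X (Sum.inr y) * MvPolynomial.X (Sum.inr z)))
  + ∑ y, MvPolynomial.C (K y) * MvPolynomial.X (Sum.inl y)

lemma Qpoly_NN {a : ℝ} {J : V → V → ℝ} {K : V → ℝ} (hJnn : ∀ y z, 0 ≤ J y z)
    (hK : ∀ y, 0 ≤ K y) : NN (Qpoly a J K) := by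
  apply NN_add
  · apply NN_mul (NN_C (by norm_num))
    apply NN_sum
    intro y _
    apply NN_sum
    intro z _
    exact NN_mul (NN_C (hJnn y z))
      (NN_add (NN_mul (NN_X _) (NN_X _)) (NN_mul (NN_X _) (NN_X _)))
  · apply NN_sum
    intro y _
    exact NN_mul (NN_C (hK y)) (NN_X _)

lemma Qpoly_eval (a : ℝ) (J : V → V → ℝ) (K : V → ℝ) (σ τ : V → ℝ) :
    MvPolynomial.eval (usite a (σ, τ)) (Qpoly a J K)
      = (1/2) * ∑ y, ∑ z, J y z * (σ y * σ z + a^2 * τ y * τ z)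
        + ∑ y, K y * (σ y + a * τ y) := by
  unfold Qpoly
  simp only [map_add, map_mul, map_sum, MvPolynomial.eval_C, MvPolynomial.eval_X]
  simp only [usite, Sum.elim_inl, Sum.elim_inr]
  congr 1
  · rw [Finset.mul_sum, Finset.mul_sum]
    apply Finset.sum_congr rfl
    intro y _
    rw [Finset.mul_sum, Finset.mul_sum]
    apply Finset.sum_congr rfl
    intro z _
    ring

lemma Ebound (J : V → V → ℝ) (hJnn : ∀ y z, 0 ≤ J y z)
    (K : V → ℝ) (hK : ∀ y, 0 ≤ K y) (a : ℝ) (ha : 0 < a) (σ τ : V → ℝ) :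
    |(1/2) * ∑ y, ∑ z, J y z * (σ y * σ z + a^2 * τ y * τ z) + ∑ y, K y * (σ y + a * τ y)|
      ≤ ((∑ y, ∑ z, J y z) * (1 + a^2) + (∑ y, K y) * (1 + a) + 1)
        * ∑ y, ((σ y)^2 + (τ y)^2 + 1) := by
  set m := ∑ y, ((σ y)^2 + (τ y)^2 + 1) with hm
  have hterm : ∀ y : V, (σ y)^2 + (τ y)^2 + 1 ≤ m := fun y =>
    Finset.single_le_sum (f := fun y : V => (σ y)^2 + (τ y)^2 + 1)
      (fun z _ => by positivity) (Finset.mem_univ y)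
  have hm0 : 0 ≤ m := Finset.sum_nonneg fun y _ => by positivity
  have hσ2 : ∀ y, (σ y)^2 ≤ m := fun y => by nlinarith [hterm y, sq_nonneg (τ y)]
  have hτ2 : ∀ y, (τ y)^2 ≤ m := fun y => by nlinarith [hterm y, sq_nonneg (σ y)]
  have habsσ : ∀ y, |σ y| ≤ m := fun y => by
    nlinarith [hterm y, sq_nonneg (|σ y| - 1), sq_abs (σ y), sq_nonneg (τ y), abs_nonneg (σ y)]
  have habsτ : ∀ y, |τ y| ≤ m := fun y => by
    nlinarith [hterm y, sq_nonneg (|τ y| - 1), sq_abs (τ y), sq_nonneg (σ y), abs_nonneg (τ y)]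
  have hJsum0 : (0:ℝ) ≤ ∑ y, ∑ z, J y z :=
    Finset.sum_nonneg fun y _ => Finset.sum_nonneg fun z _ => hJnn y z
  have hKsum0 : (0:ℝ) ≤ ∑ y, K y := Finset.sum_nonneg fun y _ => hK y
  have hJpart : |∑ y, ∑ z, J y z * (σ y * σ z + a^2 * τ y * τ z)|
      ≤ (∑ y, ∑ z, J y z) * ((1 + a^2) * m) := by
    calc |∑ y, ∑ z, J y z * (σ y * σ z + a^2 * τ y * τ z)|
        ≤ ∑ y, |∑ z, J y z * (σ y * σ z + a^2 * τ y * τ z)| := Finset.abs_sum_le_sum_abs _ _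
      _ ≤ ∑ y, ∑ z, |J y z * (σ y * σ z + a^2 * τ y * τ z)| :=
          Finset.sum_le_sum fun y _ => Finset.abs_sum_le_sum_abs _ _
      _ ≤ ∑ y, ∑ z, J y z * ((1 + a^2) * m) := by
          apply Finset.sum_le_sum
          intro y _
          apply Finset.sum_le_sum
          intro z _
          rw [abs_mul, abs_of_nonneg (hJnn y z)]
          apply mul_le_mul_of_nonneg_left ?_ (hJnn y z)
          have h1 : |σ y * σ z| ≤ m := by
            rw [abs_mul]
            nlinarith [hσ2 y, hσ2 z, sq_abs (σ y), sq_abs (σ z),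
              sq_nonneg (|σ y| - |σ z|), abs_nonneg (σ y), abs_nonneg (σ z)]
          have h2 : |τ y * τ z| ≤ m := by
            rw [abs_mul]
            nlinarith [hτ2 y, hτ2 z, sq_abs (τ y), sq_abs (τ z),
              sq_nonneg (|τ y| - |τ z|), abs_nonneg (τ y), abs_nonneg (τ z)]
          calc |σ y * σ z + a^2 * τ y * τ z| ≤ |σ y * σ z| + a^2 * |τ y * τ z| := by
                refine (abs_add_le _ _).trans ?_
                rw [show a^2 * τ y * τ z = a^2 * (τ y * τ z) by ring,
                  abs_mul (a^2) (τ y * τ z), abs_of_nonneg (sq_nonneg a)]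
            _ ≤ m + a^2 * m := add_le_add h1 (mul_le_mul_of_nonneg_left h2 (sq_nonneg a))
            _ = (1 + a^2) * m := by ring
      _ = ∑ y, (∑ z, J y z) * ((1 + a^2) * m) := by
          apply Finset.sum_congr rfl
          intro y _
          rw [Finset.sum_mul]
      _ = (∑ y, ∑ z, J y z) * ((1 + a^2) * m) := by rw [Finset.sum_mul]
  have hKpart : |∑ y, K y * (σ y + a * τ y)| ≤ (∑ y, K y) * ((1 + a) * m) := by
    calc |∑ y, K y * (σ y + a * τ y)| ≤ ∑ y, |K y * (σ y + a * τ y)| :=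
          Finset.abs_sum_le_sum_abs _ _
      _ ≤ ∑ y, K y * ((1 + a) * m) := by
          apply Finset.sum_le_sum
          intro y _
          rw [abs_mul, abs_of_nonneg (hK y)]
          apply mul_le_mul_of_nonneg_left ?_ (hK y)
          calc |σ y + a * τ y| ≤ |σ y| + a * |τ y| := by
                refine (abs_add_le _ _).trans ?_
                rw [abs_mul, abs_of_pos ha]
            _ ≤ m + a * m := add_le_add (habsσ y)
                (mul_le_mul_of_nonneg_left (habsτ y) ha.le)
            _ = (1 + a) * m := by ring
      _ = (∑ y, K y) * ((1 + a) * m) := by rw [Finset.sum_mul]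
  calc |(1/2) * ∑ y, ∑ z, J y z * (σ y * σ z + a^2 * τ y * τ z) + ∑ y, K y * (σ y + a * τ y)|
      ≤ |(1/2) * ∑ y, ∑ z, J y z * (σ y * σ z + a^2 * τ y * τ z)|
        + |∑ y, K y * (σ y + a * τ y)| := abs_add_le _ _
    _ = (1/2) * |∑ y, ∑ z, J y z * (σ y * σ z + a^2 * τ y * τ z)|
        + |∑ y, K y * (σ y + a * τ y)| := by rw [abs_mul]; norm_num
    _ ≤ (1/2) * ((∑ y, ∑ z, J y z) * ((1 + a^2) * m)) + (∑ y, K y) * ((1 + a) * m) :=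
        add_le_add (mul_le_mul_of_nonneg_left hJpart (by norm_num)) hKpart
    _ ≤ ((∑ y, ∑ z, J y z) * (1 + a^2) + (∑ y, K y) * (1 + a) + 1) * m := by
        nlinarith [mul_nonneg (mul_nonneg hJsum0 (by positivity : (0:ℝ) ≤ 1 + a^2)) hm0,
          mul_nonneg (mul_nonneg hKsum0 (by positivity : (0:ℝ) ≤ 1 + a)) hm0, hm0]

end QPart
section Final

lemma single_le_prod_real {V : Type*} [Fintype V] (f : V → ℝ) (hf : ∀ y, 1 ≤ f y) (x : V) :
    f x ≤ ∏ y, f y := by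
  classical
  rw [← Finset.mul_prod_erase Finset.univ f (Finset.mem_univ x)]
  refine le_mul_of_one_le_right (by linarith [hf x]) ?_
  calc (1:ℝ) = ∏ _y ∈ Finset.univ.erase x, (1:ℝ) := by rw [Finset.prod_const_one]
    _ ≤ ∏ y ∈ Finset.univ.erase x, f y :=
        Finset.prod_le_prod (fun _ _ => zero_le_one) (fun y _ => hf y)

/-- Core positivity step in the proof of the Wells inequality. -/
theorem wells_core_positivity
    {V : Type*} [Fintype V] [Nonempty V]
    (J : V → V → ℝ) (hJsym : ∀ y z, J y z = J z y)
    (hJnn : ∀ y z, 0 ≤ J y z) (hJdiag : ∀ y, J y y = 0)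
    (K : V → ℝ) (hK : ∀ y, 0 ≤ K y)
    (χ : Measure ℝ) [IsFiniteMeasure χ]
    (hχsym : χ.map (fun t => -t) = χ)
    (hχexp : ∀ ϑ : ℝ, 0 < ϑ → Integrable (fun t => Real.exp (ϑ * t ^ 2)) χ)
    (a : ℝ) (ha : 0 < a)
    (hWells : χ (Set.Icc 0 a) ≤ χ (Set.Ici (a * Real.sqrt 2)))
    (x : V) :
    0 ≤ ∫ σ : V → ℝ, ∫ τ : V → ℝ,
        (σ x - a * τ x) *
          Real.exp ((1 / 2) * ∑ y, ∑ z, J y z * (σ y * σ z + a ^ 2 * τ y * τ z)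
            + ∑ y, K y * (σ y + a * τ y))
        ∂(Measure.pi fun _ : V =>
            ((2 : ℝ≥0∞)⁻¹ • (Measure.dirac (-1 : ℝ) + Measure.dirac (1 : ℝ))))
        ∂(Measure.pi fun _ : V => χ) := by
  classical
  set E : (V → ℝ) → (V → ℝ) → ℝ := fun σ τ =>
    (1 / 2) * ∑ y, ∑ z, J y z * (σ y * σ z + a ^ 2 * τ y * τ z)
      + ∑ y, K y * (σ y + a * τ y) with hE
  set M : ℝ := (∑ y, ∑ z, J y z) * (1 + a ^ 2) + (∑ y, K y) * (1 + a) + 1 with hM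
  have hJsum0 : (0:ℝ) ≤ ∑ y, ∑ z, J y z :=
    Finset.sum_nonneg fun y _ => Finset.sum_nonneg fun z _ => hJnn y z
  have hKsum0 : (0:ℝ) ≤ ∑ y, K y := Finset.sum_nonneg fun y _ => hK y
  have hM0 : 0 < M := by
    rw [hM]
    nlinarith [mul_nonneg hJsum0 (by positivity : (0:ℝ) ≤ 1 + a^2),
      mul_nonneg hKsum0 (by positivity : (0:ℝ) ≤ 1 + a)]
  have hEb : ∀ σ τ : V → ℝ, |E σ τ| ≤ M * ∑ y, ((σ y)^2 + (τ y)^2 + 1) :=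
    fun σ τ => Ebound J hJnn K hK a ha σ τ
  have hEmeas : Measurable fun p : (V → ℝ) × (V → ℝ) => E p.1 p.2 := by
    rw [hE]
    apply Measurable.add
    · apply Measurable.const_mul
      apply Finset.measurable_sum
      intro y _
      apply Finset.measurable_sum
      intro z _
      fun_prop
    · apply Finset.measurable_sum
      intro y _
      fun_prop
  set G : (V → ℝ) × (V → ℝ) → ℝ := fun p => (1 + a) *
    ((∏ y, ((1 + (p.1 y)^2) * Real.exp (M * ((p.1 y)^2 + 1)))) *
      (∏ y, ((1 + (p.2 y)^2) * Real.exp (M * (p.2 y)^2)))) with hG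
  have hGc : Integrable (fun s : ℝ => (1 + s^2) * Real.exp (M * (s^2 + 1))) χ := by
    refine ((hχexp (M + 1) (by linarith)).const_mul (Real.exp M)).mono (Measurable.aestronglyMeasurable (by
        exact (measurable_const.add (measurable_id.pow_const 2)).mul
          ((measurable_const.mul ((measurable_id.pow_const 2).add_const 1)).exp)))
      (Filter.Eventually.of_forall fun s => ?_)
    rw [Real.norm_eq_abs, Real.norm_eq_abs, abs_of_nonneg (by positivity),
      abs_of_nonneg (by positivity)]
    have h2 : 1 + s^2 ≤ Real.exp (s^2) := by
      have := Real.add_one_le_exp (s^2); linarith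
    calc (1 + s^2) * Real.exp (M * (s^2 + 1))
        ≤ Real.exp (s^2) * Real.exp (M * (s^2 + 1)) :=
          mul_le_mul_of_nonneg_right h2 (Real.exp_pos _).le
      _ = Real.exp M * Real.exp ((M + 1) * s^2) := by
          rw [← Real.exp_add, ← Real.exp_add]; congr 1; ring
  have hGμI : Integrable (fun t : ℝ => (1 + t^2) * Real.exp (M * t^2)) muI :=
    muI_integrable (by fun_prop)
  have hGint : Integrable G
      ((Measure.pi fun _ : V => χ).prod (Measure.pi fun _ : V => muI)) := by
    rw [hG]
    exact ((integrable_pi_prod χ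
        (fun (_ : V) (s : ℝ) => (1 + s^2) * Real.exp (M * (s^2 + 1))) fun _ => hGc).mul_prod
      (integrable_pi_prod muI
        (fun (_ : V) (t : ℝ) => (1 + t^2) * Real.exp (M * t^2)) fun _ => hGμI)).const_mul (1 + a)
  have hGb : ∀ (σ τ : V → ℝ) (r : ℝ), |r| ≤ Real.exp |E σ τ| →
      |(σ x - a * τ x) * r| ≤ G (σ, τ) := by
    intro σ τ r hr
    have h2 : 2 * |σ x| ≤ 1 + (σ x)^2 := by
      nlinarith [sq_nonneg (|σ x| - 1), sq_abs (σ x)]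
    have h3 : 2 * |τ x| ≤ 1 + (τ x)^2 := by
      nlinarith [sq_nonneg (|τ x| - 1), sq_abs (τ x)]
    have hv : |σ x - a * τ x| ≤ (1 + a) * ((1 + (σ x)^2) * (1 + (τ x)^2)) := by
      have h1 : |σ x - a * τ x| ≤ |σ x| + a * |τ x| := by
        refine (abs_sub _ _).trans ?_
        rw [abs_mul, abs_of_pos ha]
      nlinarith [h1, h2, h3, sq_nonneg (σ x), sq_nonneg (τ x), ha.le,
        abs_nonneg (σ x), abs_nonneg (τ x),
        mul_nonneg (sq_nonneg (σ x)) (sq_nonneg (τ x)),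
        mul_nonneg ha.le (sq_nonneg (σ x)), mul_nonneg ha.le (sq_nonneg (τ x)),
        mul_nonneg (mul_nonneg ha.le (sq_nonneg (σ x))) (sq_nonneg (τ x)),
        mul_nonneg ha.le (abs_nonneg (τ x))]
    have hexp1 : Real.exp |E σ τ| ≤
        (∏ y, Real.exp (M * ((σ y)^2 + 1))) * ∏ y, Real.exp (M * (τ y)^2) := by
      rw [← Real.exp_sum, ← Real.exp_sum, ← Real.exp_add]
      apply Real.exp_le_exp.2
      refine (hEb σ τ).trans (le_of_eq ?_)
      rw [← Finset.sum_add_distrib, Finset.mul_sum]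
      apply Finset.sum_congr rfl
      intro y _
      ring
    have hone : ∀ y : V, (1:ℝ) ≤ 1 + (σ y)^2 := fun y => by nlinarith [sq_nonneg (σ y)]
    have hone' : ∀ y : V, (1:ℝ) ≤ 1 + (τ y)^2 := fun y => by nlinarith [sq_nonneg (τ y)]
    have hprod1 : (1 + (σ x)^2) ≤ ∏ y, (1 + (σ y)^2) :=
      single_le_prod_real (fun y : V => 1 + (σ y)^2) hone x
    have hprod2 : (1 + (τ x)^2) ≤ ∏ y, (1 + (τ y)^2) :=
      single_le_prod_real (fun y : V => 1 + (τ y)^2) hone' x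
    have hApos : (0:ℝ) ≤ ∏ y, (1 + (σ y)^2) :=
      Finset.prod_nonneg fun y _ => by nlinarith [hone y]
    have hBpos : (0:ℝ) ≤ ∏ y, (1 + (τ y)^2) :=
      Finset.prod_nonneg fun y _ => by nlinarith [hone' y]
    calc |(σ x - a * τ x) * r| = |σ x - a * τ x| * |r| := abs_mul _ _
      _ ≤ ((1 + a) * ((1 + (σ x)^2) * (1 + (τ x)^2))) * Real.exp |E σ τ| :=
          mul_le_mul hv hr (abs_nonneg r) (by positivity)
      _ ≤ ((1 + a) * ((∏ y, (1 + (σ y)^2)) * (∏ y, (1 + (τ y)^2))))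
          * ((∏ y, Real.exp (M * ((σ y)^2 + 1))) * ∏ y, Real.exp (M * (τ y)^2)) := by
          apply mul_le_mul ?_ hexp1 (Real.exp_pos _).le ?_
          · apply mul_le_mul_of_nonneg_left ?_ (by positivity : (0:ℝ) ≤ 1 + a)
            exact mul_le_mul hprod1 hprod2 (by positivity) hApos
          · have := mul_nonneg hApos hBpos
            positivity
      _ = G (σ, τ) := by
          rw [hG]
          show _ = (1 + a) *
            ((∏ y, ((1 + (σ y)^2) * Real.exp (M * ((σ y)^2 + 1)))) *
              (∏ y, ((1 + (τ y)^2) * Real.exp (M * (τ y)^2))))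
          rw [Finset.prod_mul_distrib, Finset.prod_mul_distrib]
          ring
  have hFint : Integrable (Function.uncurry fun σ τ : V → ℝ =>
      (σ x - a * τ x) * Real.exp (E σ τ))
      ((Measure.pi fun _ : V => χ).prod (Measure.pi fun _ : V => muI)) := by
    refine hGint.mono ?_ (Filter.Eventually.of_forall fun p => ?_)
    · apply Measurable.aestronglyMeasurable
      apply Measurable.mul
      · fun_prop
      · exact Real.measurable_exp.comp hEmeas
    · rw [Real.norm_eq_abs, Real.norm_eq_abs]
      refine le_trans ?_ (le_abs_self (G p))
      show |(p.1 x - a * p.2 x) * Real.exp (E p.1 p.2)| ≤ G p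
      have := hGb p.1 p.2 (Real.exp (E p.1 p.2)) (by
        rw [abs_of_pos (Real.exp_pos _)]
        exact Real.exp_le_exp.2 (le_abs_self _))
      simpa using this
  -- the polynomial approximants
  set e : (V ⊕ V) →₀ ℕ := Finsupp.single (Sum.inr x) 1 with he
  set PN : ℕ → MvPolynomial (V ⊕ V) ℝ := fun N =>
    ∑ k ∈ Finset.range N, MvPolynomial.C ((k.factorial : ℝ))⁻¹ * (Qpoly a J K) ^ k with hPN
  have hPN_NN : ∀ N, NN (PN N) := fun N =>
    NN_sum _ _ fun k _ => NN_mul (NN_C (by positivity)) (NN_pow (Qpoly_NN hJnn hK) k)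
  have hFeq : ∀ (N : ℕ) (p : (V → ℝ) × (V → ℝ)),
      Mono a e p * MvPolynomial.eval (usite a p) (PN N)
        = (p.1 x - a * p.2 x) * ∑ k ∈ Finset.range N, (E p.1 p.2) ^ k / (k.factorial : ℝ) := by
    intro N p
    rw [he, Mono_single]
    have h1 : usite a p (Sum.inr x) = p.1 x - a * p.2 x := rfl
    rw [h1]
    congr 1
    rw [hPN, map_sum]
    apply Finset.sum_congr rfl
    intro k _
    rw [map_mul, MvPolynomial.eval_C, map_pow]
    have h2 : MvPolynomial.eval (usite a p) (Qpoly a J K) = E p.1 p.2 := by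
      rw [hE]
      exact Qpoly_eval a J K p.1 p.2
    rw [h2, div_eq_mul_inv]
    ring
  have h_lim : ∀ p : (V → ℝ) × (V → ℝ),
      Filter.Tendsto (fun N => Mono a e p * MvPolynomial.eval (usite a p) (PN N))
        Filter.atTop (nhds ((p.1 x - a * p.2 x) * Real.exp (E p.1 p.2))) := by
    intro p
    have hs : HasSum (fun k : ℕ => (E p.1 p.2) ^ k / (k.factorial : ℝ))
        (Real.exp (E p.1 p.2)) := by
      have h1 := (NormedSpace.expSeries_div_summable (E p.1 p.2)).hasSum
      have h3 : Real.exp (E p.1 p.2) = ∑' n : ℕ, (E p.1 p.2) ^ n / (n.factorial : ℝ) := by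
        rw [Real.exp_eq_exp_ℝ, NormedSpace.exp_eq_tsum_div]
      rw [h3]
      exact h1
    have h4 := hs.tendsto_sum_nat.const_mul (p.1 x - a * p.2 x)
    refine Filter.Tendsto.congr (fun N => ?_) h4
    rw [hFeq N p]
  have h_bound : ∀ (N : ℕ), ∀ᵐ p ∂((Measure.pi fun _ : V => χ).prod (Measure.pi fun _ : V => muI)),
      ‖Mono a e p * MvPolynomial.eval (usite a p) (PN N)‖ ≤ G p := by
    intro N
    refine Filter.Eventually.of_forall fun p => ?_
    rw [Real.norm_eq_abs, hFeq N p]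
    have hsum : |∑ k ∈ Finset.range N, (E p.1 p.2) ^ k / (k.factorial : ℝ)|
        ≤ Real.exp |E p.1 p.2| := by
      refine (Finset.abs_sum_le_sum_abs _ _).trans ?_
      refine le_trans ?_ (Real.sum_le_exp_of_nonneg (abs_nonneg _) N)
      apply Finset.sum_le_sum
      intro k _
      rw [abs_div, abs_pow, Nat.abs_cast]
    have hg := hGb p.1 p.2 _ hsum
    simpa using hg
  have h_meas : ∀ N : ℕ, AEStronglyMeasurable
      (fun p => Mono a e p * MvPolynomial.eval (usite a p) (PN N))
      ((Measure.pi fun _ : V => χ).prod (Measure.pi fun _ : V => muI)) := fun N =>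
    (poly_integrable hχexp ha (PN N) e).aestronglyMeasurable
  have hDCT := MeasureTheory.tendsto_integral_of_dominated_convergence G h_meas hGint h_bound
    (Filter.Eventually.of_forall h_lim)
  have h_nonneg : ∀ N : ℕ, 0 ≤ ∫ p, Mono a e p * MvPolynomial.eval (usite a p) (PN N)
      ∂((Measure.pi fun _ : V => χ).prod (Measure.pi fun _ : V => muI)) := fun N =>
    poly_nonneg hχsym hχexp ha hWells (PN N) (hPN_NN N) e
  have hfinal : 0 ≤ ∫ p, (p.1 x - a * p.2 x) * Real.exp (E p.1 p.2)
      ∂((Measure.pi fun _ : V => χ).prod (Measure.pi fun _ : V => muI)) :=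
    ge_of_tendsto' hDCT h_nonneg
  have heq : (∫ σ : V → ℝ, ∫ τ : V → ℝ, (σ x - a * τ x) * Real.exp (E σ τ)
        ∂(Measure.pi fun _ : V => muI) ∂(Measure.pi fun _ : V => χ))
      = ∫ p, (p.1 x - a * p.2 x) * Real.exp (E p.1 p.2)
        ∂((Measure.pi fun _ : V => χ).prod (Measure.pi fun _ : V => muI)) :=
    integral_integral hFint
  show 0 ≤ ∫ σ : V → ℝ, ∫ τ : V → ℝ, (σ x - a * τ x) * Real.exp (E σ τ)
      ∂(Measure.pi fun _ : V => muI) ∂(Measure.pi fun _ : V => χ)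
  rw [heq]
  exact hfinal

end Final
end WellsAux
end

section
/- One-site positivity for all powers. Let χ be a finite symmetric Borel measure on ℝ all of whose absolute moments are finite (∫ |t|^n χ(dt) < ∞ for every n ∈ ℕ), and let a > 0 satisfy the Wells condition χ([a√2, ∞)) ≥ χ([0, a]). Then for all m, n ∈ ℕ, ∫_ℝ [ (σ + a)^m (σ − a)^n + (σ − a)^m (σ + a)^n ] χ(dσ) ≥ 0. -/
open MeasureTheory

lemma one_site_integrable_poly (χ : Measure ℝ) [IsFiniteMeasure χ]
    (hmom : ∀ n : ℕ, Integrable (fun t => |t| ^ n) χ) (p : Polynomial ℝ) :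
    Integrable (fun σ => p.eval σ) χ := by
  induction p using Polynomial.induction_on' with
  | add p q hp hq =>
      simp only [Polynomial.eval_add]; exact hp.add hq
  | monomial n c =>
      have hpow : Integrable (fun σ : ℝ => σ ^ n) χ := by
        refine (hmom n).mono' ((measurable_id.pow_const n).aestronglyMeasurable) ?_
        filter_upwards with σ
        simp [abs_pow]
      simpa [Polynomial.eval_monomial] using hpow.const_mul c

lemma one_site_integrable_F (χ : Measure ℝ) [IsFiniteMeasure χ]
    (hmom : ∀ n : ℕ, Integrable (fun t => |t| ^ n) χ) (a : ℝ) (m n : ℕ) :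
    Integrable (fun σ => (σ + a) ^ m * (σ - a) ^ n + (σ - a) ^ m * (σ + a) ^ n) χ := by
  have := one_site_integrable_poly χ hmom
    ((Polynomial.X + Polynomial.C a) ^ m * (Polynomial.X - Polynomial.C a) ^ n
      + (Polynomial.X - Polynomial.C a) ^ m * (Polynomial.X + Polynomial.C a) ^ n)
  simpa using this

lemma one_site_aux
    (χ : Measure ℝ) [IsFiniteMeasure χ]
    (hχsym : χ.map (fun t => -t) = χ)
    (hmom : ∀ n : ℕ, Integrable (fun t => |t| ^ n) χ)
    (a : ℝ) (ha : 0 < a)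
    (hWells : χ (Set.Icc 0 a) ≤ χ (Set.Ici (a * Real.sqrt 2)))
    (m n : ℕ) (hmn : m ≤ n) (hpar : Even (m + n)) :
    0 ≤ ∫ σ, ((σ + a) ^ m * (σ - a) ^ n + (σ - a) ^ m * (σ + a) ^ n) ∂χ := by
  by_cases hm : Even m
  · -- both exponents even, integrand pointwise nonneg
    have hn : Even n := (Nat.even_add.mp hpar).mp hm
    refine integral_nonneg fun σ => ?_
    exact add_nonneg (mul_nonneg (hm.pow_nonneg _) (hn.pow_nonneg _))
      (mul_nonneg (hm.pow_nonneg _) (hn.pow_nonneg _))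
  · have hmodd : Odd m := Nat.not_even_iff_odd.mp hm
    obtain ⟨k, rfl⟩ : ∃ k, n = m + k := ⟨n - m, (Nat.add_sub_cancel' hmn).symm⟩
    have hkeven : Even k := by
      rcases hpar with ⟨j, hj⟩
      exact ⟨j - m, by omega⟩
    set F : ℝ → ℝ := fun σ => (σ + a) ^ m * (σ - a) ^ (m + k) + (σ - a) ^ m * (σ + a) ^ (m + k)
      with hF_def
    have hfac : ∀ σ : ℝ,
        F σ = ((σ + a) * (σ - a)) ^ m * ((σ - a) ^ k + (σ + a) ^ k) := by
      intro σ
      simp only [hF_def, pow_add, mul_pow]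
      ring
    set C : ℝ := a ^ (2 * m) * ((2 * a) ^ k + (0 : ℝ) ^ k) with hC_def
    have haa : a ^ (2 * m) = (a ^ 2) ^ m := pow_mul a 2 m
    have hC : 0 ≤ C := by
      apply mul_nonneg (pow_nonneg ha.le _)
      apply add_nonneg (pow_nonneg (by linarith) _) (pow_nonneg le_rfl _)
    have hsumle : ∀ x y : ℝ, 0 ≤ x → 0 ≤ y → x ^ k + y ^ k ≤ (x + y) ^ k + (0 : ℝ) ^ k := by
      intro x y hx hy
      rcases Nat.eq_zero_or_pos k with h | h
      · simp [h]
      · rw [zero_pow h.ne']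
        linarith [pow_add_pow_le hx hy h.ne']
    have hzero_le : ∀ x : ℝ, 0 ≤ x → (0 : ℝ) ^ k ≤ x ^ k := fun x hx =>
      pow_le_pow_left₀ le_rfl hx k
    -- sqrt 2 facts
    have hs0 : 0 ≤ Real.sqrt 2 := Real.sqrt_nonneg 2
    have hs2 : Real.sqrt 2 ^ 2 = 2 := Real.sq_sqrt (by norm_num)
    have hs1 : 1 ≤ Real.sqrt 2 := by nlinarith
    -- bound on the middle interval
    have hA : ∀ σ ∈ Set.Ioo (-a) a, -C ≤ F σ := by
      rintro σ ⟨h1, h2⟩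
      have e0 : (0 : ℝ) ≤ (σ + a) * (a - σ) := mul_nonneg (by linarith) (by linarith)
      have p1 : ((σ + a) * (a - σ)) ^ m ≤ (a ^ 2) ^ m :=
        pow_le_pow_left₀ e0 (by nlinarith [sq_nonneg σ]) m
      have p0 : (0 : ℝ) ≤ ((σ + a) * (a - σ)) ^ m := pow_nonneg e0 m
      have s1 : (a - σ) ^ k + (σ + a) ^ k ≤ (2 * a) ^ k + (0 : ℝ) ^ k := by
        have := hsumle (a - σ) (σ + a) (by linarith) (by linarith)
        rwa [show (a - σ) + (σ + a) = 2 * a by ring] at this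
      have s0 : (0 : ℝ) ≤ (a - σ) ^ k + (σ + a) ^ k :=
        add_nonneg (pow_nonneg (by linarith) _) (pow_nonneg (by linarith) _)
      have hP : ((σ + a) * (a - σ)) ^ m * ((a - σ) ^ k + (σ + a) ^ k) ≤ C := by
        rw [hC_def, haa]
        exact mul_le_mul p1 s1 s0 (pow_nonneg (sq_nonneg a) m)
      have hrew : F σ = -(((σ + a) * (a - σ)) ^ m * ((a - σ) ^ k + (σ + a) ^ k)) := by
        rw [hfac σ, show (σ + a) * (σ - a) = -((σ + a) * (a - σ)) by ring,
          hmodd.neg_pow, show (σ - a) = -(a - σ) by ring, hkeven.neg_pow]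
        ring
      rw [hrew]
      linarith
    -- bound on the right tail
    have hB : ∀ σ : ℝ, a * Real.sqrt 2 ≤ σ → C ≤ F σ := by
      intro σ hσ
      have hσa : a ≤ σ := le_trans (by nlinarith) hσ
      have hσ2 : 2 * a ^ 2 ≤ σ ^ 2 := by
        have h0 : (0 : ℝ) ≤ a * Real.sqrt 2 := mul_nonneg ha.le hs0
        have hmul := mul_nonneg (sub_nonneg.2 hσ)
          (add_nonneg (le_trans h0 hσ) h0)
        nlinarith [hmul, hs2]
      have e0 : a ^ 2 ≤ (σ + a) * (σ - a) := by nlinarith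
      have p1 : (a ^ 2) ^ m ≤ ((σ + a) * (σ - a)) ^ m :=
        pow_le_pow_left₀ (sq_nonneg a) e0 m
      have u1 : (2 * a) ^ k ≤ (σ + a) ^ k :=
        pow_le_pow_left₀ (by linarith) (by linarith) k
      have w1 : (0 : ℝ) ^ k ≤ (σ - a) ^ k := hzero_le _ (by linarith)
      have hc0 : (0 : ℝ) ≤ (2 * a) ^ k + (0 : ℝ) ^ k :=
        add_nonneg (pow_nonneg (by linarith) _) (pow_nonneg le_rfl _)
      have pP : (0 : ℝ) ≤ ((σ + a) * (σ - a)) ^ m :=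
        pow_nonneg (by nlinarith) m
      rw [hfac σ, hC_def, haa]
      calc (a ^ 2) ^ m * ((2 * a) ^ k + (0 : ℝ) ^ k)
          ≤ ((σ + a) * (σ - a)) ^ m * ((σ - a) ^ k + (σ + a) ^ k) :=
            mul_le_mul p1 (by linarith) hc0 pP
        _ = _ := rfl
    -- nonnegativity outside (-a, a)
    have hnonneg : ∀ σ : ℝ, σ ∉ Set.Ioo (-a) a → 0 ≤ F σ := by
      intro σ hσ
      have h' : σ ≤ -a ∨ a ≤ σ := by
        rcases le_or_gt σ (-a) with h | h
        · exact Or.inl h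
        · right
          by_contra hh
          push_neg at hh
          exact hσ ⟨h, hh⟩
      have e0 : (0 : ℝ) ≤ (σ + a) * (σ - a) := by
        rcases h' with h' | h'
        · nlinarith [mul_nonneg (show (0:ℝ) ≤ -(σ + a) by linarith)
            (show (0:ℝ) ≤ -(σ - a) by linarith)]
        · exact mul_nonneg (by linarith) (by linarith)
      rw [hfac σ]
      exact mul_nonneg (pow_nonneg e0 m)
        (add_nonneg (hkeven.pow_nonneg _) (hkeven.pow_nonneg _))
    -- evenness of F
    have heven : ∀ σ : ℝ, F (-σ) = F σ := by
      intro σ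
      rw [hfac, hfac, show (-σ + a) * (-σ - a) = (σ + a) * (σ - a) by ring,
        show (-σ - a : ℝ) = -(σ + a) by ring, show (-σ + a : ℝ) = -(σ - a) by ring,
        hkeven.neg_pow, hkeven.neg_pow]
      ring
    -- sets
    set Bp : Set ℝ := Set.Ici (a * Real.sqrt 2) with hBp_def
    set Bm : Set ℝ := Set.Iic (-(a * Real.sqrt 2)) with hBm_def
    set A : Set ℝ := Set.Ioo (-a) a with hA_def
    have haas : a ≤ a * Real.sqrt 2 := by nlinarith
    -- the comparison function
    set G : ℝ → ℝ := fun σ =>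
      Bp.indicator (fun _ => C) σ + Bm.indicator (fun _ => C) σ - A.indicator (fun _ => C) σ
      with hG_def
    have hintBp : Integrable (Bp.indicator fun _ => C) χ :=
      (integrable_const C).indicator measurableSet_Ici
    have hintBm : Integrable (Bm.indicator fun _ => C) χ :=
      (integrable_const C).indicator measurableSet_Iic
    have hintA : Integrable (A.indicator fun _ => C) χ :=
      (integrable_const C).indicator measurableSet_Ioo
    have hG_int : Integrable G χ := (hintBp.add hintBm).sub hintA
    have hF_int : Integrable F χ := one_site_integrable_F χ hmom a m (m + k)
    have hGF : G ≤ F := by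
      intro σ
      by_cases hσA : σ ∈ A
      · have hnBp : σ ∉ Bp := by
          simp only [hBp_def, Set.mem_Ici, not_le]
          exact lt_of_lt_of_le hσA.2 haas
        have hnBm : σ ∉ Bm := by
          simp only [hBm_def, Set.mem_Iic, not_le]
          have := hσA.1
          nlinarith
        simp only [hG_def, Set.indicator_of_mem hσA, Set.indicator_of_notMem hnBp,
          Set.indicator_of_notMem hnBm]
        have := hA σ hσA
        simpa using this
      · have hF0 : 0 ≤ F σ := hnonneg σ hσA
        by_cases hσBp : σ ∈ Bp
        · have hnBm : σ ∉ Bm := by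
            simp only [hBm_def, Set.mem_Iic, not_le]
            have : a * Real.sqrt 2 ≤ σ := hσBp
            nlinarith
          simp only [hG_def, Set.indicator_of_mem hσBp, Set.indicator_of_notMem hnBm,
            Set.indicator_of_notMem hσA]
          have := hB σ hσBp
          linarith
        · by_cases hσBm : σ ∈ Bm
          · simp only [hG_def, Set.indicator_of_mem hσBm, Set.indicator_of_notMem hσBp,
              Set.indicator_of_notMem hσA]
            have h1 : a * Real.sqrt 2 ≤ -σ := by
              have : σ ≤ -(a * Real.sqrt 2) := hσBm
              linarith
            have := hB (-σ) h1
            rw [heven σ] at this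
            linarith
          · simp only [hG_def, Set.indicator_of_notMem hσBp, Set.indicator_of_notMem hσBm,
              Set.indicator_of_notMem hσA]
            simpa using hF0
    have hmono : ∫ σ, G σ ∂χ ≤ ∫ σ, F σ ∂χ := integral_mono hG_int hF_int hGF
    have hval : ∫ σ, G σ ∂χ =
        (χ Bp).toReal * C + (χ Bm).toReal * C - (χ A).toReal * C := by
      have e1 : ∫ σ, G σ ∂χ =
          (∫ σ, ((Bp.indicator fun _ => C) σ + (Bm.indicator fun _ => C) σ) ∂χ)
            - ∫ σ, (A.indicator fun _ => C) σ ∂χ :=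
        integral_sub (hintBp.add hintBm) hintA
      have e2 : ∫ σ, ((Bp.indicator fun _ => C) σ + (Bm.indicator fun _ => C) σ) ∂χ
          = (∫ σ, (Bp.indicator fun _ => C) σ ∂χ) + ∫ σ, (Bm.indicator fun _ => C) σ ∂χ :=
        integral_add hintBp hintBm
      rw [e1, e2, integral_indicator_const C measurableSet_Ici,
        integral_indicator_const C measurableSet_Iic,
        integral_indicator_const C measurableSet_Ioo]
      simp [smul_eq_mul]
      rfl
    -- measure comparison
    have hmapIcc : χ (Set.Icc (-a) 0) = χ (Set.Icc 0 a) := by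
      have hpre : (fun t : ℝ => -t) ⁻¹' Set.Icc (-a) 0 = Set.Icc 0 a := by
        ext t
        simp only [Set.mem_preimage, Set.mem_Icc]
        constructor
        · rintro ⟨h1, h2⟩; exact ⟨by linarith, by linarith⟩
        · rintro ⟨h1, h2⟩; exact ⟨by linarith, by linarith⟩
      calc χ (Set.Icc (-a) 0) = (χ.map (fun t => -t)) (Set.Icc (-a) 0) := by rw [hχsym]
        _ = χ ((fun t : ℝ => -t) ⁻¹' Set.Icc (-a) 0) :=
            Measure.map_apply measurable_neg measurableSet_Icc
        _ = χ (Set.Icc 0 a) := by rw [hpre]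
    have hmapIic : χ Bm = χ Bp := by
      have hpre : (fun t : ℝ => -t) ⁻¹' Set.Iic (-(a * Real.sqrt 2)) =
          Set.Ici (a * Real.sqrt 2) := by
        ext t
        simp only [Set.mem_preimage, Set.mem_Iic, Set.mem_Ici]
        constructor <;> intro h <;> linarith
      calc χ Bm = (χ.map (fun t => -t)) Bm := by rw [hχsym]
        _ = χ ((fun t : ℝ => -t) ⁻¹' Set.Iic (-(a * Real.sqrt 2))) :=
            Measure.map_apply measurable_neg measurableSet_Iic
        _ = χ Bp := by rw [hpre]
    have hAsub : A ⊆ Set.Icc (-a) 0 ∪ Set.Icc 0 a := by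
      rintro σ ⟨h1, h2⟩
      rcases le_total σ 0 with h | h
      · exact Or.inl ⟨h1.le, h⟩
      · exact Or.inr ⟨h, h2.le⟩
    have hmeas : χ A ≤ χ Bp + χ Bm := by
      calc χ A ≤ χ (Set.Icc (-a) 0 ∪ Set.Icc 0 a) := measure_mono hAsub
        _ ≤ χ (Set.Icc (-a) 0) + χ (Set.Icc 0 a) := measure_union_le _ _
        _ = χ (Set.Icc 0 a) + χ (Set.Icc 0 a) := by rw [hmapIcc]
        _ ≤ χ Bp + χ Bm := by rw [hmapIic]; exact add_le_add hWells hWells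
    have htoReal : (χ A).toReal ≤ (χ Bp).toReal + (χ Bm).toReal := by
      rw [← ENNReal.toReal_add (measure_ne_top χ Bp) (measure_ne_top χ Bm)]
      exact ENNReal.toReal_mono
        (ENNReal.add_ne_top.mpr ⟨measure_ne_top χ Bp, measure_ne_top χ Bm⟩) hmeas
    have hGpos : 0 ≤ ∫ σ, G σ ∂χ := by
      rw [hval]
      nlinarith [mul_le_mul_of_nonneg_right htoReal hC]
    calc (0 : ℝ) ≤ ∫ σ, G σ ∂χ := hGpos
      _ ≤ _ := hmono

/-- One-site positivity for all powers. -/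
theorem one_site_positivity
    (χ : Measure ℝ) [IsFiniteMeasure χ]
    (hχsym : χ.map (fun t => -t) = χ)
    (hmom : ∀ n : ℕ, Integrable (fun t => |t| ^ n) χ)
    (a : ℝ) (ha : 0 < a)
    (hWells : χ (Set.Icc 0 a) ≤ χ (Set.Ici (a * Real.sqrt 2)))
    (m n : ℕ) :
    0 ≤ ∫ σ, ((σ + a) ^ m * (σ - a) ^ n + (σ - a) ^ m * (σ + a) ^ n) ∂χ := by
  by_cases hpar : Even (m + n)
  · rcases le_total m n with hmn | hmn
    · exact one_site_aux χ hχsym hmom a ha hWells m n hmn hpar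
    · have h := one_site_aux χ hχsym hmom a ha hWells n m hmn (by rwa [add_comm] at hpar)
      have heq : (fun σ : ℝ => (σ + a) ^ n * (σ - a) ^ m + (σ - a) ^ n * (σ + a) ^ m)
          = fun σ : ℝ => (σ + a) ^ m * (σ - a) ^ n + (σ - a) ^ m * (σ + a) ^ n := by
        funext σ; ring
      rwa [heq] at h
  · -- odd total degree: the integral vanishes by symmetry
    have hodd : Odd (m + n) := Nat.not_even_iff_odd.mp hpar
    set F : ℝ → ℝ := fun σ => (σ + a) ^ m * (σ - a) ^ n + (σ - a) ^ m * (σ + a) ^ n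
      with hF_def
    have hF_int : Integrable F χ := one_site_integrable_F χ hmom a m n
    have h1 : ∫ σ, F σ ∂χ = ∫ σ, F (-σ) ∂χ := by
      nth_rewrite 1 [← hχsym]
      exact integral_map measurable_neg.aemeasurable
        (by rw [hχsym]; exact hF_int.aestronglyMeasurable)
    have key : ((-1 : ℝ)) ^ m * ((-1 : ℝ)) ^ n = -1 := by
      rw [← pow_add]; exact hodd.neg_one_pow
    have h2 : ∀ σ : ℝ, F (-σ) = -F σ := by
      intro σ
      simp only [hF_def]
      rw [show (-σ + a : ℝ) = -(σ - a) by ring, show (-σ - a : ℝ) = -(σ + a) by ring,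
        neg_pow (σ - a) m, neg_pow (σ + a) n, neg_pow (σ + a) m, neg_pow (σ - a) n]
      linear_combination ((σ - a) ^ m * (σ + a) ^ n + (σ + a) ^ m * (σ - a) ^ n) * key
    have h3 : ∫ σ, F (-σ) ∂χ = -∫ σ, F σ ∂χ := by
      have : (fun σ : ℝ => F (-σ)) = fun σ => -F σ := funext h2
      rw [this, integral_neg]
    have : ∫ σ, F σ ∂χ = 0 := by linarith [h1, h3, h1.trans h3]
    rw [hF_def] at this
    exact le_of_eq this.symm
end

section
/- One-site positivity in the odd–odd case. Let χ be a finite symmetric Borel measure on ℝ all of whose absolute moments are finite (∫ |t|^n χ(dt) < ∞ for every n ∈ ℕ), and let a > 0 satisfy the Wells condition χ([a√2, ∞)) ≥ χ([0, a]). Then for all integers k ≥ l ≥ 0, ∫_ℝ [ (σ + a)^{2k+1} (σ − a)^{2l+1} + (σ − a)^{2k+1} (σ + a)^{2l+1} ] χ(dσ) ≥ 0. -/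
open MeasureTheory

private lemma five_pow_ge (m : ℕ) (hm : 1 ≤ m) : (4:ℝ)^m + 1 ≤ 5^m := by
  induction m with
  | zero => omega
  | succ n ih =>
    rcases Nat.eq_or_lt_of_le hm with h | h
    · simp [← h]; norm_num
    · have hn : 1 ≤ n := by omega
      have := ih hn
      have h4 : (0:ℝ) ≤ 4^n := by positivity
      rw [pow_succ, pow_succ]; nlinarith

private lemma f_factor (a σ : ℝ) (l m : ℕ) :
    (σ + a) ^ (2 * (l + m) + 1) * (σ - a) ^ (2 * l + 1)
      + (σ - a) ^ (2 * (l + m) + 1) * (σ + a) ^ (2 * l + 1)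
    = ((σ+a)*(σ-a))^(2*l+1) * ((σ+a)^(2*m) + (σ-a)^(2*m)) := by
  have h : 2 * (l + m) + 1 = (2*l+1) + 2*m := by ring
  rw [h, pow_add, pow_add, mul_pow]; ring

private lemma h_nonneg (a σ : ℝ) (m : ℕ) : 0 ≤ (σ+a)^(2*m) + (σ-a)^(2*m) := by
  rw [pow_mul, pow_mul]; positivity

-- bound on [-a, a]
private lemma bound_S1 (a : ℝ) (ha : 0 < a) (l m : ℕ) (σ : ℝ)
    (h1 : -a ≤ σ) (h2 : σ ≤ a) :
    -((a^2)^(2*l+1) * ((2*a)^(2*m) + a^(2*m)))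
      ≤ ((σ+a)*(σ-a))^(2*l+1) * ((σ+a)^(2*m) + (σ-a)^(2*m)) := by
  have hh0 : 0 ≤ (σ+a)^(2*m) + (σ-a)^(2*m) := h_nonneg a σ m
  have hPle : (σ+a)*(σ-a) ≤ 0 := by nlinarith
  have hPabs : |(σ+a)*(σ-a)| ≤ a^2 := by
    rw [abs_le]
    constructor
    · nlinarith [sq_nonneg σ]
    · nlinarith
  have hPpow_le : ((σ+a)*(σ-a))^(2*l+1) ≤ 0 :=
    Odd.pow_nonpos ⟨l, by ring⟩ hPle
  have hPpow_ge : -(a^2)^(2*l+1) ≤ ((σ+a)*(σ-a))^(2*l+1) := by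
    have hb : |((σ+a)*(σ-a))^(2*l+1)| ≤ (a^2)^(2*l+1) := by
      rw [abs_pow]
      exact pow_le_pow_left₀ (abs_nonneg _) hPabs _
    linarith [neg_abs_le (((σ+a)*(σ-a))^(2*l+1)), (abs_le.mp hb).2]
  have hhH : (σ+a)^(2*m) + (σ-a)^(2*m) ≤ (2*a)^(2*m) + a^(2*m) := by
    rw [pow_mul, pow_mul, pow_mul, pow_mul]
    rcases le_total 0 σ with hs | hs
    · have e1 : (σ+a)^2 ≤ (2*a)^2 := by nlinarith
      have e2 : (σ-a)^2 ≤ a^2 := by nlinarith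
      exact add_le_add (pow_le_pow_left₀ (sq_nonneg _) e1 m)
        (pow_le_pow_left₀ (sq_nonneg _) e2 m)
    · have e1 : (σ+a)^2 ≤ a^2 := by nlinarith
      have e2 : (σ-a)^2 ≤ (2*a)^2 := by nlinarith
      have := add_le_add (pow_le_pow_left₀ (sq_nonneg _) e1 m)
        (pow_le_pow_left₀ (sq_nonneg _) e2 m)
      linarith
  have hA : (0:ℝ) ≤ (a^2)^(2*l+1) := by positivity
  nlinarith [mul_nonneg (show (0:ℝ) ≤ ((σ+a)*(σ-a))^(2*l+1) + (a^2)^(2*l+1) by linarith) hh0,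
    mul_le_mul_of_nonneg_left hhH hA]

-- bound on |σ| ≥ a√2
private lemma bound_S2 (a : ℝ) (ha : 0 < a) (l m : ℕ) (σ : ℝ)
    (hσ2 : 2*a^2 ≤ σ^2) :
    (a^2)^(2*l+1) * ((2*a)^(2*m) + a^(2*m))
      ≤ ((σ+a)*(σ-a))^(2*l+1) * ((σ+a)^(2*m) + (σ-a)^(2*m)) := by
  have hh0 : 0 ≤ (σ+a)^(2*m) + (σ-a)^(2*m) := h_nonneg a σ m
  have hPge : a^2 ≤ (σ+a)*(σ-a) := by nlinarith
  have hPpow : (a^2)^(2*l+1) ≤ ((σ+a)*(σ-a))^(2*l+1) :=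
    pow_le_pow_left₀ (by positivity) hPge _
  have habs : a ≤ |σ| := by
    rcases le_total 0 σ with hs | hs
    · rw [abs_of_nonneg hs]; nlinarith [abs_nonneg σ]
    · rw [abs_of_nonpos hs]; nlinarith
  have hHh : (2*a)^(2*m) + a^(2*m) ≤ (σ+a)^(2*m) + (σ-a)^(2*m) := by
    rcases Nat.eq_zero_or_pos m with hm0 | hm1
    · simp [hm0]
    · have h5 : (5:ℝ) * a^2 ≤ (σ+a)^2 ∨ (5:ℝ) * a^2 ≤ (σ-a)^2 := by
        rcases le_total 0 σ with hs | hs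
        · left
          have : a ≤ σ := by rw [abs_of_nonneg hs] at habs; exact habs
          nlinarith
        · right
          have : σ ≤ -a := by rw [abs_of_nonpos hs] at habs; linarith
          nlinarith
      have key : (5:ℝ)^m * (a^2)^m ≤ (σ+a)^(2*m) + (σ-a)^(2*m) := by
        rw [pow_mul, pow_mul, ← mul_pow]
        rcases h5 with h5 | h5
        · have := pow_le_pow_left₀ (by positivity : (0:ℝ) ≤ 5*a^2) h5 m
          have h2 := pow_nonneg (sq_nonneg (σ-a)) m
          linarith
        · have := pow_le_pow_left₀ (by positivity : (0:ℝ) ≤ 5*a^2) h5 m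
          have h2 := pow_nonneg (sq_nonneg (σ+a)) m
          linarith
      have hHle : (2*a)^(2*m) + a^(2*m) ≤ (5:ℝ)^m * (a^2)^m := by
        rw [pow_mul, pow_mul]
        have h45 := five_pow_ge m hm1
        have ha2 : (0:ℝ) ≤ (a^2)^m := by positivity
        have e1 : ((2*a)^2)^m = 4^m * (a^2)^m := by
          rw [show (2*a)^2 = 4*(a^2) by ring, mul_pow]
        rw [e1]
        nlinarith
      linarith
  have hA : (0:ℝ) ≤ (a^2)^(2*l+1) := by positivity
  calc (a^2)^(2*l+1) * ((2*a)^(2*m) + a^(2*m))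
      ≤ (a^2)^(2*l+1) * ((σ+a)^(2*m) + (σ-a)^(2*m)) :=
        mul_le_mul_of_nonneg_left hHh hA
    _ ≤ ((σ+a)*(σ-a))^(2*l+1) * ((σ+a)^(2*m) + (σ-a)^(2*m)) :=
        mul_le_mul_of_nonneg_right hPpow hh0
-- bound outside
private lemma bound_out (a : ℝ) (l m : ℕ) (σ : ℝ)
    (hσ2 : a^2 ≤ σ^2) :
    0 ≤ ((σ+a)*(σ-a))^(2*l+1) * ((σ+a)^(2*m) + (σ-a)^(2*m)) := by
  have hP0 : 0 ≤ (σ+a)*(σ-a) := by nlinarith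
  exact mul_nonneg (pow_nonneg hP0 _) (h_nonneg a σ m)

private lemma integrable_poly (χ : Measure ℝ) [IsFiniteMeasure χ]
    (hmom : ∀ n : ℕ, Integrable (fun t => |t| ^ n) χ)
    (a : ℝ) (ha : 0 < a) (k l : ℕ) :
    Integrable (fun σ : ℝ => (σ + a) ^ (2 * k + 1) * (σ - a) ^ (2 * l + 1)
        + (σ - a) ^ (2 * k + 1) * (σ + a) ^ (2 * l + 1)) χ := by
  have hbound : Integrable (fun σ : ℝ => 2*(|σ|+a)^((2*k+1)+(2*l+1))) χ := by
    have heq : (fun σ : ℝ => 2*(|σ|+a)^((2*k+1)+(2*l+1)))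
        = fun σ : ℝ => 2 * ∑ j ∈ Finset.range (((2*k+1)+(2*l+1))+1),
            |σ|^j * a^(((2*k+1)+(2*l+1))-j) * (((2*k+1)+(2*l+1)).choose j) := by
      funext σ; rw [add_pow]
    rw [heq]
    apply Integrable.const_mul
    apply integrable_finset_sum
    intro j _
    exact ((hmom j).mul_const _).mul_const _
  have hcont : Continuous (fun σ : ℝ => (σ + a) ^ (2 * k + 1) * (σ - a) ^ (2 * l + 1)
      + (σ - a) ^ (2 * k + 1) * (σ + a) ^ (2 * l + 1)) := by fun_prop
  apply Integrable.mono' hbound hcont.aestronglyMeasurable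
  filter_upwards with σ
  have h1 : |σ+a| ≤ |σ|+a := by
    calc |σ+a| ≤ |σ| + |a| := abs_add_le _ _
      _ = |σ| + a := by rw [abs_of_pos ha]
  have h2 : |σ-a| ≤ |σ|+a := by
    calc |σ-a| ≤ |σ| + |a| := abs_sub _ _
      _ = |σ| + a := by rw [abs_of_pos ha]
  have esplit : (|σ|+a)^((2*k+1)+(2*l+1)) = (|σ|+a)^(2*k+1) * (|σ|+a)^(2*l+1) :=
    pow_add _ _ _
  have e1 : |(σ+a)^(2*k+1)*(σ-a)^(2*l+1)| ≤ (|σ|+a)^((2*k+1)+(2*l+1)) := by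
    rw [abs_mul, abs_pow, abs_pow, esplit]
    exact mul_le_mul (pow_le_pow_left₀ (abs_nonneg _) h1 _)
      (pow_le_pow_left₀ (abs_nonneg _) h2 _) (by positivity) (by positivity)
  have e2 : |(σ-a)^(2*k+1)*(σ+a)^(2*l+1)| ≤ (|σ|+a)^((2*k+1)+(2*l+1)) := by
    rw [abs_mul, abs_pow, abs_pow, esplit]
    exact mul_le_mul (pow_le_pow_left₀ (abs_nonneg _) h2 _)
      (pow_le_pow_left₀ (abs_nonneg _) h1 _) (by positivity) (by positivity)
  calc ‖(σ + a) ^ (2 * k + 1) * (σ - a) ^ (2 * l + 1)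
        + (σ - a) ^ (2 * k + 1) * (σ + a) ^ (2 * l + 1)‖
      ≤ |(σ+a)^(2*k+1)*(σ-a)^(2*l+1)| + |(σ-a)^(2*k+1)*(σ+a)^(2*l+1)| := abs_add_le _ _
    _ ≤ 2*(|σ|+a)^((2*k+1)+(2*l+1)) := by linarith

/-- One-site positivity in the odd–odd case. -/
theorem one_site_positivity_odd_odd
    (χ : Measure ℝ) [IsFiniteMeasure χ]
    (hχsym : χ.map (fun t => -t) = χ)
    (hmom : ∀ n : ℕ, Integrable (fun t => |t| ^ n) χ)
    (a : ℝ) (ha : 0 < a)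
    (hWells : χ (Set.Icc 0 a) ≤ χ (Set.Ici (a * Real.sqrt 2)))
    (k l : ℕ) (hkl : l ≤ k) :
    0 ≤ ∫ σ, ((σ + a) ^ (2 * k + 1) * (σ - a) ^ (2 * l + 1)
        + (σ - a) ^ (2 * k + 1) * (σ + a) ^ (2 * l + 1)) ∂χ := by
  obtain ⟨m, hk⟩ : ∃ m, k = l + m := ⟨k - l, by omega⟩
  subst hk
  have hsqrt2' : 1 < Real.sqrt 2 := by
    have h2 : Real.sqrt 2 ^ 2 = 2 := Real.sq_sqrt (by norm_num)
    nlinarith [Real.sqrt_nonneg 2]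
  have hab : a < a * Real.sqrt 2 := by nlinarith
  have hb : 0 < a * Real.sqrt 2 := lt_trans ha hab
  have hb2 : (a * Real.sqrt 2) ^ 2 = 2 * a ^ 2 := by
    rw [mul_pow, Real.sq_sqrt (by norm_num : (0:ℝ) ≤ 2)]; ring
  set C : ℝ := (a^2)^(2*l+1) * ((2*a)^(2*m) + a^(2*m)) with hCdef
  have hC : 0 ≤ C := by positivity
  set S1 : Set ℝ := Set.Icc (-a) a with hS1def
  set S2 : Set ℝ := Set.Iic (-(a * Real.sqrt 2)) ∪ Set.Ici (a * Real.sqrt 2) with hS2def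
  have hS1m : MeasurableSet S1 := measurableSet_Icc
  have hS2m : MeasurableSet S2 := measurableSet_Iic.union measurableSet_Ici
  -- symmetry consequences
  have hmap : ∀ s : Set ℝ, MeasurableSet s → χ ((fun t : ℝ => -t) ⁻¹' s) = χ s := by
    intro s hs
    conv_rhs => rw [← hχsym]
    rw [Measure.map_apply measurable_neg hs]
  -- measure comparison
  have hmeas_cmp : χ S1 ≤ χ S2 := by
    have h1 : χ (Set.Icc (-a) 0) = χ (Set.Icc 0 a) := by
      have := hmap (Set.Icc (-a) 0) measurableSet_Icc
      rw [← this]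
      congr 1
      ext t
      simp only [Set.mem_preimage, Set.mem_Icc]
      constructor <;> intro ⟨u, v⟩ <;> constructor <;> linarith
    have h2 : χ (Set.Iic (-(a * Real.sqrt 2))) = χ (Set.Ici (a * Real.sqrt 2)) := by
      have := hmap (Set.Iic (-(a * Real.sqrt 2))) measurableSet_Iic
      rw [← this]
      congr 1
      ext t
      simp only [Set.mem_preimage, Set.mem_Iic, Set.mem_Ici]
      constructor <;> intro <;> linarith
    have hsub : S1 ⊆ Set.Icc (-a) 0 ∪ Set.Icc 0 a := by
      intro t ht
      rcases ht with ⟨u, v⟩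
      rcases le_total t 0 with h | h
      · exact Or.inl ⟨u, h⟩
      · exact Or.inr ⟨h, v⟩
    calc χ S1 ≤ χ (Set.Icc (-a) 0) + χ (Set.Icc 0 a) :=
          le_trans (measure_mono hsub) (measure_union_le _ _)
      _ = χ (Set.Icc 0 a) + χ (Set.Icc 0 a) := by rw [h1]
      _ ≤ χ (Set.Ici (a * Real.sqrt 2)) + χ (Set.Ici (a * Real.sqrt 2)) :=
          add_le_add hWells hWells
      _ = χ (Set.Iic (-(a * Real.sqrt 2))) + χ (Set.Ici (a * Real.sqrt 2)) := by rw [h2]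
      _ = χ S2 := by
          rw [hS2def, measure_union _ measurableSet_Ici]
          rw [Set.disjoint_left]
          intro t ht ht'
          simp only [Set.mem_Iic, Set.mem_Ici] at ht ht'
          linarith
  -- pointwise inequality
  have hpt : ∀ σ : ℝ,
      S2.indicator (fun _ => C) σ + S1.indicator (fun _ => -C) σ
      ≤ (σ + a) ^ (2 * (l+m) + 1) * (σ - a) ^ (2 * l + 1)
        + (σ - a) ^ (2 * (l+m) + 1) * (σ + a) ^ (2 * l + 1) := by
    intro σ
    rw [f_factor a σ l m]
    by_cases h1 : σ ∈ S1
    · have h2 : σ ∉ S2 := by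
        intro h2
        rcases h1 with ⟨u, v⟩
        rcases h2 with h | h
        · simp only [Set.mem_Iic] at h; linarith
        · simp only [Set.mem_Ici] at h; linarith
      rw [Set.indicator_of_mem h1, Set.indicator_of_notMem h2]
      rcases h1 with ⟨u, v⟩
      have := bound_S1 a ha l m σ u v
      rw [hCdef]; linarith
    · by_cases h2 : σ ∈ S2
      · rw [Set.indicator_of_mem h2, Set.indicator_of_notMem h1]
        have hσ2 : 2*a^2 ≤ σ^2 := by
          rcases h2 with hσ | hσ
          · simp only [Set.mem_Iic] at hσ; nlinarith
          · simp only [Set.mem_Ici] at hσ; nlinarith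
        have := bound_S2 a ha l m σ hσ2
        rw [hCdef]; linarith
      · rw [Set.indicator_of_notMem h2, Set.indicator_of_notMem h1]
        have hσ2 : a^2 ≤ σ^2 := by
          simp only [hS1def, Set.mem_Icc, not_and_or, not_le] at h1
          rcases h1 with h | h <;> nlinarith
        have := bound_out a l m σ hσ2
        linarith
  -- integrability
  have hint_f := integrable_poly χ hmom a ha (l+m) l
  have hint_g : Integrable
      (fun σ => S2.indicator (fun _ => C) σ + S1.indicator (fun _ => -C) σ) χ :=
    ((integrable_const C).indicator hS2m).add ((integrable_const (-C)).indicator hS1m)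
  have hint := integral_mono hint_g hint_f hpt
  have hgval : ∫ σ, (S2.indicator (fun _ => C) σ + S1.indicator (fun _ => -C) σ) ∂χ
      = (χ S2).toReal * C - (χ S1).toReal * C := by
    rw [integral_add ((integrable_const C).indicator hS2m)
      ((integrable_const (-C)).indicator hS1m)]
    rw [integral_indicator_const _ hS2m, integral_indicator_const _ hS1m]
    simp [smul_eq_mul]; unfold Measure.real; ring
  have hmono : (χ S1).toReal ≤ (χ S2).toReal :=
    ENNReal.toReal_mono (measure_ne_top χ S2) hmeas_cmp
  have hgpos : 0 ≤ ∫ σ, (S2.indicator (fun _ => C) σ + S1.indicator (fun _ => -C) σ) ∂χ := by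
    rw [hgval]
    nlinarith
  linarith
end

section
/- Three-piece lower estimate. Let χ be a finite Borel measure on ℝ, let a > 0 and l, p ∈ ℕ, and set φ(σ) := (σ + a)^{2p} + (σ − a)^{2p}. Assume the function σ ↦ (σ² − a²)^{2l+1} φ(σ) is χ-integrable on [0, ∞). Then ∫_{[0,∞)} (σ² − a²)^{2l+1} φ(σ) χ(dσ) ≥ a^{4l+2} · [ φ(a√2) · χ([a√2, ∞)) − φ(a) · χ([0, a]) ]. -/
open MeasureTheory

/-- The auxiliary function φ. -/
noncomputable def phi (a : ℝ) (p : ℕ) (σ : ℝ) : ℝ :=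
  (σ + a) ^ (2 * p) + (σ - a) ^ (2 * p)

lemma phi_nonneg (a : ℝ) (p : ℕ) (σ : ℝ) : 0 ≤ phi a p σ := by
  unfold phi; exact add_nonneg ((even_two_mul p).pow_nonneg _) ((even_two_mul p).pow_nonneg _)

lemma phi_le_at_a {a : ℝ} (ha : 0 < a) (p : ℕ) {σ : ℝ} (h0 : 0 ≤ σ) (h1 : σ ≤ a) :
    phi a p σ ≤ phi a p a := by
  unfold phi
  rcases eq_or_ne p 0 with hp | hp
  · simp [hp]
  · have h2p : 2 * p ≠ 0 := by omega
    have hrw : (σ - a) ^ (2 * p) = (a - σ) ^ (2 * p) := by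
      rw [show σ - a = -(a - σ) by ring, Even.neg_pow (even_two_mul p)]
    rw [hrw, show a - a = 0 by ring, zero_pow h2p, add_zero,
      show a + a = (σ + a) + (a - σ) by ring]
    exact pow_add_pow_le (by linarith) (by linarith) h2p

lemma phi_sqrt2_le {a : ℝ} (ha : 0 < a) (p : ℕ) {σ : ℝ} (h : a * Real.sqrt 2 ≤ σ) :
    phi a p (a * Real.sqrt 2) ≤ phi a p σ := by
  have hs : (1 : ℝ) < Real.sqrt 2 := by
    rw [show (1:ℝ) = Real.sqrt 1 by simp]
    exact Real.sqrt_lt_sqrt (by norm_num) (by norm_num)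
  have h1 : a < a * Real.sqrt 2 := (lt_mul_iff_one_lt_right ha).2 hs
  unfold phi
  gcongr <;> linarith

/-- Three-piece lower estimate. -/
theorem three_piece_estimate
    (χ : Measure ℝ) [IsFiniteMeasure χ]
    (a : ℝ) (ha : 0 < a) (l p : ℕ)
    (hint : IntegrableOn
      (fun σ => (σ ^ 2 - a ^ 2) ^ (2 * l + 1) * phi a p σ) (Set.Ici 0) χ) :
    a ^ (4 * l + 2) *
        (phi a p (a * Real.sqrt 2) * (χ (Set.Ici (a * Real.sqrt 2))).toReal
          - phi a p a * (χ (Set.Icc 0 a)).toReal)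
      ≤ ∫ σ in Set.Ici (0 : ℝ), (σ ^ 2 - a ^ 2) ^ (2 * l + 1) * phi a p σ ∂χ := by
  set f : ℝ → ℝ := fun σ => (σ ^ 2 - a ^ 2) ^ (2 * l + 1) * phi a p σ with hf
  have hs : (1 : ℝ) < Real.sqrt 2 := by
    rw [show (1:ℝ) = Real.sqrt 1 by simp]
    exact Real.sqrt_lt_sqrt (by norm_num) (by norm_num)
  have haas : a < a * Real.sqrt 2 := (lt_mul_iff_one_lt_right ha).2 hs
  have hsq : (a * Real.sqrt 2) ^ 2 = 2 * a ^ 2 := by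
    rw [mul_pow, Real.sq_sqrt (by norm_num : (0:ℝ) ≤ 2)]; ring
  have hca : a ^ (4 * l + 2) = (a ^ 2) ^ (2 * l + 1) := by
    rw [← pow_mul]; ring_nf
  -- subsets
  have hsub1 : Set.Icc (0:ℝ) a ⊆ Set.Ici 0 := fun x hx => hx.1
  have hsub2 : Set.Ioo a (a * Real.sqrt 2) ⊆ Set.Ici (0:ℝ) :=
    fun x hx => le_of_lt (lt_trans ha hx.1)
  have hsub3 : Set.Ici (a * Real.sqrt 2) ⊆ Set.Ici (0:ℝ) :=
    fun x hx => le_trans (le_of_lt (lt_trans ha haas)) hx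
  have hint1 : IntegrableOn f (Set.Icc 0 a) χ := hint.mono_set hsub1
  have hint2 : IntegrableOn f (Set.Ioo a (a * Real.sqrt 2)) χ := hint.mono_set hsub2
  have hint3 : IntegrableOn f (Set.Ici (a * Real.sqrt 2)) χ := hint.mono_set hsub3
  -- splitting
  have hu2 : Set.Icc (0:ℝ) a ∪ Set.Ioo a (a * Real.sqrt 2) = Set.Ico 0 (a * Real.sqrt 2) :=
    Set.Icc_union_Ioo_eq_Ico ha.le haas
  have hu1 : Set.Ico (0:ℝ) (a * Real.sqrt 2) ∪ Set.Ici (a * Real.sqrt 2) = Set.Ici 0 :=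
    Set.Ico_union_Ici_eq_Ici (le_of_lt (lt_trans ha haas))
  have hdisj2 : Disjoint (Set.Icc (0:ℝ) a) (Set.Ioo a (a * Real.sqrt 2)) := by
    rw [Set.disjoint_left]
    rintro x ⟨_, hx2⟩ ⟨hx3, _⟩
    exact absurd hx2 (not_le.2 hx3)
  have hdisj1 : Disjoint (Set.Ico (0:ℝ) (a * Real.sqrt 2)) (Set.Ici (a * Real.sqrt 2)) := by
    rw [Set.disjoint_left]
    rintro x ⟨_, hx2⟩ hx3
    exact absurd hx3 (not_le.2 hx2)
  have e1 : ∫ σ in Set.Ici (0:ℝ), f σ ∂χ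
      = ∫ σ in Set.Ico (0:ℝ) (a * Real.sqrt 2), f σ ∂χ
        + ∫ σ in Set.Ici (a * Real.sqrt 2), f σ ∂χ := by
    rw [← hu1]
    exact setIntegral_union hdisj1 measurableSet_Ici (hint.mono_set (hu1 ▸ Set.subset_union_left))
      hint3
  have e2 : ∫ σ in Set.Ico (0:ℝ) (a * Real.sqrt 2), f σ ∂χ
      = ∫ σ in Set.Icc (0:ℝ) a, f σ ∂χ
        + ∫ σ in Set.Ioo a (a * Real.sqrt 2), f σ ∂χ := by
    rw [← hu2]
    exact setIntegral_union hdisj2 measurableSet_Ioo hint1 hint2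
  -- bound on [0,a]
  have b1 : -(a ^ (4 * l + 2) * phi a p a) * (χ (Set.Icc (0:ℝ) a)).toReal
      ≤ ∫ σ in Set.Icc (0:ℝ) a, f σ ∂χ := by
    apply setIntegral_ge_of_const_le_real measurableSet_Icc (measure_ne_top χ _) _ hint1
    intro x hx
    have hx0 : 0 ≤ x := hx.1
    have hx1 : x ≤ a := hx.2
    have hodd : Odd (2 * l + 1) := ⟨l, by ring⟩
    have hrw : (x ^ 2 - a ^ 2) ^ (2 * l + 1) = -((a ^ 2 - x ^ 2) ^ (2 * l + 1)) := by
      rw [show x ^ 2 - a ^ 2 = -(a ^ 2 - x ^ 2) by ring, Odd.neg_pow hodd]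
    have hb1 : (a ^ 2 - x ^ 2) ^ (2 * l + 1) ≤ (a ^ 2) ^ (2 * l + 1) :=
      pow_le_pow_left₀ (by nlinarith) (by nlinarith) _
    have hb2 : phi a p x ≤ phi a p a := phi_le_at_a ha p hx0 hx1
    have hb0 : 0 ≤ (a ^ 2 - x ^ 2) ^ (2 * l + 1) := pow_nonneg (by nlinarith) _
    have := mul_le_mul hb1 hb2 (phi_nonneg a p x) (by positivity)
    simp only [hf, hrw, hca]
    nlinarith [this]
  -- bound on (a, a√2)
  have b2 : (0:ℝ) ≤ ∫ σ in Set.Ioo a (a * Real.sqrt 2), f σ ∂χ := by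
    apply setIntegral_nonneg measurableSet_Ioo
    intro x hx
    have : (0:ℝ) ≤ x ^ 2 - a ^ 2 := by nlinarith [hx.1]
    exact mul_nonneg (pow_nonneg this _) (phi_nonneg a p x)
  -- bound on [a√2, ∞)
  have b3 : a ^ (4 * l + 2) * phi a p (a * Real.sqrt 2) * (χ (Set.Ici (a * Real.sqrt 2))).toReal
      ≤ ∫ σ in Set.Ici (a * Real.sqrt 2), f σ ∂χ := by
    apply setIntegral_ge_of_const_le_real measurableSet_Ici (measure_ne_top χ _) _ hint3
    intro x hx
    have hx0 : a * Real.sqrt 2 ≤ x := hx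
    have h1 : a ^ 2 ≤ x ^ 2 - a ^ 2 := by nlinarith [hsq, lt_trans ha haas]
    have h2 : (a ^ 2) ^ (2 * l + 1) ≤ (x ^ 2 - a ^ 2) ^ (2 * l + 1) :=
      pow_le_pow_left₀ (by positivity) h1 _
    have h3 : phi a p (a * Real.sqrt 2) ≤ phi a p x := phi_sqrt2_le ha p hx0
    have := mul_le_mul h2 h3 (phi_nonneg a p _) (pow_nonneg (le_trans (by positivity) h1) _)
    simp only [hf, hca]
    nlinarith [this]
  have key : a ^ (4 * l + 2) *
        (phi a p (a * Real.sqrt 2) * (χ (Set.Ici (a * Real.sqrt 2))).toReal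
          - phi a p a * (χ (Set.Icc 0 a)).toReal)
      = a ^ (4 * l + 2) * phi a p (a * Real.sqrt 2) * (χ (Set.Ici (a * Real.sqrt 2))).toReal
        + -(a ^ (4 * l + 2) * phi a p a) * (χ (Set.Icc (0:ℝ) a)).toReal := by ring
  rw [key]
  calc a ^ (4 * l + 2) * phi a p (a * Real.sqrt 2) * (χ (Set.Ici (a * Real.sqrt 2))).toReal
        + -(a ^ (4 * l + 2) * phi a p a) * (χ (Set.Icc (0:ℝ) a)).toReal
      ≤ ∫ σ in Set.Ici (0:ℝ), f σ ∂χ := by rw [e1, e2]; linarith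
    _ = _ := rfl
end

section
/- Positivity of the reduced one-site integral under the Wells condition. Let χ be a finite Borel measure on ℝ, let a > 0 and l, p ∈ ℕ, and set φ(σ) := (σ + a)^{2p} + (σ − a)^{2p}. Assume the function σ ↦ (σ² − a²)^{2l+1} φ(σ) is χ-integrable on [0, ∞) and that χ satisfies the Wells condition χ([a√2, ∞)) ≥ χ([0, a]). Then ∫_{[0,∞)} (σ² − a²)^{2l+1} φ(σ) χ(dσ) ≥ 0. -/
open MeasureTheory

lemma phi_hasDerivAt (a : ℝ) (p : ℕ) (t : ℝ) :
    HasDerivAt (phi a p)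
      (((2 * p : ℕ) : ℝ) * (t + a) ^ (2 * p - 1) + ((2 * p : ℕ) : ℝ) * (t - a) ^ (2 * p - 1)) t := by
  have h1 : HasDerivAt (fun t : ℝ => (t + a) ^ (2 * p))
      (((2 * p : ℕ) : ℝ) * (t + a) ^ (2 * p - 1) * 1) t :=
    ((hasDerivAt_id t).add_const a).pow _
  have h2 : HasDerivAt (fun t : ℝ => (t - a) ^ (2 * p))
      (((2 * p : ℕ) : ℝ) * (t - a) ^ (2 * p - 1) * 1) t :=
    ((hasDerivAt_id t).sub_const a).pow _
  have h := h1.add h2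
  simp only [mul_one] at h
  exact h

lemma phi_monotoneOn (a : ℝ) (p : ℕ) : MonotoneOn (phi a p) (Set.Ici 0) := by
  have hderiv : ∀ t : ℝ, 0 < t →
      0 ≤ ((2 * p : ℕ) : ℝ) * (t + a) ^ (2 * p - 1) + ((2 * p : ℕ) : ℝ) * (t - a) ^ (2 * p - 1) := by
    intro t ht
    rcases Nat.eq_zero_or_pos p with hp | hp
    · simp [hp]
    · have hodd : Odd (2 * p - 1) := by
        refine ⟨p - 1, ?_⟩; omega
      have hle : -(t + a) ≤ t - a := by linarith
      have := (hodd.strictMono_pow (R := ℝ)).monotone hle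
      have hneg : (-(t + a)) ^ (2 * p - 1) = -((t + a) ^ (2 * p - 1)) :=
        hodd.neg_pow _
      rw [hneg] at this
      have hp2 : (0 : ℝ) ≤ ((2 * p : ℕ) : ℝ) := by positivity
      nlinarith
  refine monotoneOn_of_deriv_nonneg (convex_Ici 0) ?_ ?_ ?_
  · exact fun t _ => (phi_hasDerivAt a p t).continuousAt.continuousWithinAt
  · intro t ht
    exact ((phi_hasDerivAt a p t).differentiableAt).differentiableWithinAt
  · intro t ht
    rw [interior_Ici] at ht
    rw [(phi_hasDerivAt a p t).deriv]
    exact hderiv t ht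

/-- Positivity of the reduced one-site integral under the Wells condition. -/
theorem reduced_one_site_positivity
    (χ : Measure ℝ) [IsFiniteMeasure χ]
    (a : ℝ) (ha : 0 < a) (l p : ℕ)
    (hint : IntegrableOn
      (fun σ => (σ ^ 2 - a ^ 2) ^ (2 * l + 1) * phi a p σ) (Set.Ici 0) χ)
    (hWells : χ (Set.Icc 0 a) ≤ χ (Set.Ici (a * Real.sqrt 2))) :
    0 ≤ ∫ σ in Set.Ici (0 : ℝ), (σ ^ 2 - a ^ 2) ^ (2 * l + 1) * phi a p σ ∂χ := by
  set g : ℝ → ℝ := fun σ => (σ ^ 2 - a ^ 2) ^ (2 * l + 1) * phi a p σ with hg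
  set M : ℝ := (a ^ 2) ^ (2 * l + 1) * phi a p a with hM
  have hs2 : (1 : ℝ) ≤ Real.sqrt 2 := by
    rw [show (1 : ℝ) = Real.sqrt 1 by simp]
    exact Real.sqrt_le_sqrt (by norm_num)
  have haa : a ≤ a * Real.sqrt 2 := by nlinarith
  have hsplit : Set.Ici (0 : ℝ) = Set.Icc 0 a ∪ Set.Ioi a :=
    (Set.Icc_union_Ioi_eq_Ici ha.le).symm
  have hdisj : Disjoint (Set.Icc (0:ℝ) a) (Set.Ioi a) := by
    rw [Set.disjoint_left]
    rintro x ⟨_, hx2⟩ hx3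
    exact absurd hx3 (not_lt.mpr hx2)
  have hint1 : IntegrableOn g (Set.Icc 0 a) χ :=
    hint.mono_set (fun x hx => hx.1)
  have hint2 : IntegrableOn g (Set.Ioi a) χ :=
    hint.mono_set (fun x hx => ha.le.trans (le_of_lt (Set.mem_Ioi.mp hx)))
  have hint3 : IntegrableOn g (Set.Ici (a * Real.sqrt 2)) χ :=
    hint.mono_set (fun x hx => le_trans (by positivity) (Set.mem_Ici.mp hx))
  -- pointwise bound on [0, a]
  have hboundA : ∀ σ ∈ Set.Icc (0:ℝ) a, -M ≤ g σ := by
    rintro σ ⟨h0, h1⟩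
    have hodd : Odd (2 * l + 1) := ⟨l, by ring⟩
    have hc : -(a ^ 2) ≤ σ ^ 2 - a ^ 2 := by nlinarith
    have h2 : (-(a ^ 2)) ^ (2 * l + 1) ≤ (σ ^ 2 - a ^ 2) ^ (2 * l + 1) :=
      (hodd.strictMono_pow (R := ℝ)).monotone hc
    rw [hodd.neg_pow] at h2
    have h3 : (σ ^ 2 - a ^ 2) ^ (2 * l + 1) ≤ 0 := by
      apply hodd.pow_nonpos; nlinarith
    have h4 : phi a p σ ≤ phi a p a := phi_monotoneOn a p h0 ha.le h1
    have h5 : 0 ≤ phi a p σ := phi_nonneg a p σ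
    have h6 : 0 ≤ (a ^ 2) ^ (2 * l + 1) := by positivity
    simp only [hg, hM]
    nlinarith
  -- pointwise bound on [a√2, ∞)
  have hboundB : ∀ σ ∈ Set.Ici (a * Real.sqrt 2), M ≤ g σ := by
    intro σ hσ
    have hσ' : a * Real.sqrt 2 ≤ σ := hσ
    have hσ0 : 0 ≤ σ := le_trans (by positivity) hσ'
    have hsq : (a * Real.sqrt 2) ^ 2 = 2 * a ^ 2 := by
      rw [mul_pow, Real.sq_sqrt (by norm_num : (0:ℝ) ≤ 2)]; ring
    have hσ2 : 2 * a ^ 2 ≤ σ ^ 2 := by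
      rw [← hsq]; exact pow_le_pow_left₀ (by positivity) hσ' 2
    have h1 : a ^ 2 ≤ σ ^ 2 - a ^ 2 := by linarith
    have h2 : (a ^ 2) ^ (2 * l + 1) ≤ (σ ^ 2 - a ^ 2) ^ (2 * l + 1) :=
      pow_le_pow_left₀ (by positivity) h1 _
    have h3 : phi a p a ≤ phi a p σ :=
      phi_monotoneOn a p (Set.mem_Ici.mpr ha.le) (Set.mem_Ici.mpr hσ0)
        (le_trans haa hσ')
    have h4 : 0 ≤ phi a p a := phi_nonneg a p a
    have h6 : 0 ≤ (a ^ 2) ^ (2 * l + 1) := by positivity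
    simp only [hg, hM]
    nlinarith
  have hM0 : 0 ≤ M := by
    have := phi_nonneg a p a
    positivity
  -- split the integral
  rw [hsplit, setIntegral_union hdisj measurableSet_Ioi hint1 hint2]
  -- bound on [0,a]
  have hA : -M * (χ (Set.Icc 0 a)).toReal ≤ ∫ σ in Set.Icc (0:ℝ) a, g σ ∂χ :=
    setIntegral_ge_of_const_le_real measurableSet_Icc (measure_ne_top χ _) hboundA hint1
  -- bound on (a,∞): restrict further to [a√2,∞)
  have hgnonneg : ∀ σ ∈ Set.Ioi a, 0 ≤ g σ := by
    intro σ hσ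
    have hσ' : a < σ := hσ
    have h1 : 0 ≤ σ ^ 2 - a ^ 2 := by nlinarith
    have := phi_nonneg a p σ
    simp only [hg]
    positivity
  have hsub : Set.Ici (a * Real.sqrt 2) ⊆ Set.Ioi a := by
    intro x hx
    have h12 : (1 : ℝ) < Real.sqrt 2 := by
      rw [show (1:ℝ) = Real.sqrt 1 by simp]
      exact Real.sqrt_lt_sqrt (by norm_num) (by norm_num)
    have : a < a * Real.sqrt 2 := by nlinarith
    exact lt_of_lt_of_le this hx
  have hB1 : (∫ σ in Set.Ici (a * Real.sqrt 2), g σ ∂χ) ≤ ∫ σ in Set.Ioi a, g σ ∂χ :=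
    setIntegral_mono_set hint2
      ((ae_restrict_iff' measurableSet_Ioi).mpr (Filter.Eventually.of_forall hgnonneg))
      (HasSubset.Subset.eventuallyLE hsub)
  have hB2 : M * (χ (Set.Ici (a * Real.sqrt 2))).toReal ≤
      ∫ σ in Set.Ici (a * Real.sqrt 2), g σ ∂χ :=
    setIntegral_ge_of_const_le_real measurableSet_Ici (measure_ne_top χ _) hboundB hint3
  have hmeas : (χ (Set.Icc 0 a)).toReal ≤ (χ (Set.Ici (a * Real.sqrt 2))).toReal :=
    ENNReal.toReal_mono (measure_ne_top χ _) hWells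
  have hMm : M * (χ (Set.Icc 0 a)).toReal ≤ M * (χ (Set.Ici (a * Real.sqrt 2))).toReal :=
    mul_le_mul_of_nonneg_left hmeas hM0
  linarith
end
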